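/- arXiv:1408.0044 — 6 statements merged into one kernel-verified Lean document; each statement's English description precedes it below -/
import Mathlib

section
/- Let A and H₀ be real constants with A ≠ 0 and H₀ > 0. Suppose H : ℝ → ℝ is differentiable, satisfies H'(t) = A·(H(t)² − H₀²) for every t ∈ ℝ, and is not a constant function. Then there exists t₀ ∈ ℝ such that H(t) = −H₀·tanh(A·H₀·(t − t₀)) for all t ∈ ℝ; in particular, up to time translation, H(t) = −H₀·tanh(A·H₀·t) is the unique non-constant solution of this ODE defined on all of ℝ. -/
open Real Filter Set

/-- If `u' = g·u` with `g` continuous and `u s = 0`, then `u ≡ 0`. -/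
lemma cpo_zero_of_deriv_eq_mul (g u : ℝ → ℝ) (hg : Continuous g)
    (hu : Differentiable ℝ u) (hode : ∀ t, deriv u t = g t * u t)
    (s : ℝ) (hus : u s = 0) : ∀ t, u t = 0 := by
  set G : ℝ → ℝ := fun t => ∫ x in s..t, g x with hGdef
  have hG : ∀ t, HasDerivAt G (g t) t := fun t =>
    intervalIntegral.integral_hasDerivAt_right (hg.intervalIntegrable s t)
      hg.aestronglyMeasurable.stronglyMeasurableAtFilter hg.continuousAt
  set φ : ℝ → ℝ := fun t => u t * Real.exp (-G t) with hφdef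
  have hφ : ∀ t, HasDerivAt φ 0 t := by
    intro t
    have h1 : HasDerivAt (fun t => Real.exp (-G t)) (Real.exp (-G t) * (-g t)) t :=
      ((hG t).neg).exp
    have h2 : HasDerivAt (fun t => u t * Real.exp (-G t)) (deriv u t * Real.exp (-G t) + u t * (Real.exp (-G t) * (-g t))) t := ((hu t).hasDerivAt).mul h1
    convert h2 using 1
    rw [hode]; ring
  have hc : ∀ t, φ t = φ s :=
    fun t => is_const_of_deriv_eq_zero (fun x => (hφ x).differentiableAt)
      (fun x => (hφ x).deriv) t s
  intro t
  have h := hc t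
  have hφs : φ s = 0 := by simp [hφdef, hus]
  rw [hφs] at h
  have := Real.exp_ne_zero (-G t)
  exact (mul_eq_zero.mp h).resolve_right this

/-- If `u' = c·u`, then `u t = u 0 · exp (c t)`. -/
lemma cpo_eq_mul_exp (c : ℝ) (u : ℝ → ℝ) (hu : Differentiable ℝ u)
    (hode : ∀ t, deriv u t = c * u t) : ∀ t, u t = u 0 * Real.exp (c * t) := by
  set φ : ℝ → ℝ := fun t => u t * Real.exp (-(c * t)) with hφdef
  have hφ : ∀ t, HasDerivAt φ 0 t := by
    intro t
    have h0 : HasDerivAt (fun x : ℝ => -(c * x)) (-c) t := by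
      simpa [Pi.neg_def] using ((hasDerivAt_id t).const_mul c).neg
    have h1 : HasDerivAt (fun t => Real.exp (-(c * t))) (Real.exp (-(c * t)) * (-c)) t := h0.exp
    have h2 : HasDerivAt (fun t => u t * Real.exp (-(c * t))) (deriv u t * Real.exp (-(c * t)) + u t * (Real.exp (-(c * t)) * (-c))) t := ((hu t).hasDerivAt).mul h1
    convert h2 using 1
    rw [hode]; ring
  have hc : ∀ t, φ t = φ 0 :=
    fun t => is_const_of_deriv_eq_zero (fun x => (hφ x).differentiableAt)
      (fun x => (hφ x).deriv) t 0
  intro t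
  have h := hc t
  simp only [hφdef, mul_zero, neg_zero, Real.exp_zero, mul_one] at h
  have hexp : Real.exp (-(c * t)) * Real.exp (c * t) = 1 := by
    rw [← Real.exp_add]; simp
  calc u t = u t * (Real.exp (-(c * t)) * Real.exp (c * t)) := by rw [hexp, mul_one]
    _ = (u t * Real.exp (-(c * t))) * Real.exp (c * t) := by ring
    _ = u 0 * Real.exp (c * t) := by rw [h]

/-- Let `A ≠ 0` and `H₀ > 0`. If `H : ℝ → ℝ` is differentiable, satisfies
`H' = A·(H² − H₀²)` everywhere, and is not constant, then for some `t₀`,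
`H(t) = −H₀·tanh(A·H₀·(t − t₀))` for all `t`: up to time translation,
`−H₀·tanh(A·H₀·t)` is the unique non-constant global solution of this ODE. -/
theorem cpo_hubble_ode_unique
    (A H₀ : ℝ) (hA : A ≠ 0) (hH₀ : 0 < H₀) (H : ℝ → ℝ)
    (hdiff : Differentiable ℝ H)
    (hode : ∀ t : ℝ, deriv H t = A * ((H t)^2 - H₀^2))
    (hnonconst : ¬ ∃ c : ℝ, ∀ t : ℝ, H t = c) :
    ∃ t₀ : ℝ, ∀ t : ℝ, H t = -H₀ * Real.tanh (A * H₀ * (t - t₀)) := by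
  have hHcont : Continuous H := hdiff.continuous
  -- H never equals H₀
  have hne1 : ∀ t, H t ≠ H₀ := by
    intro s hs
    apply hnonconst
    refine ⟨H₀, fun t => ?_⟩
    have key := cpo_zero_of_deriv_eq_mul (fun t => A * (H t + H₀)) (fun t => H t - H₀)
      (by continuity) (hdiff.sub_const _)
      (fun t => by rw [deriv_sub_const, hode]; ring) s (by simp [hs]) t
    linarith [key]
  -- H never equals -H₀
  have hne2 : ∀ t, H t ≠ -H₀ := by
    intro s hs
    apply hnonconst
    refine ⟨-H₀, fun t => ?_⟩
    have key := cpo_zero_of_deriv_eq_mul (fun t => A * (H t - H₀)) (fun t => H t + H₀)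
      (by continuity) (hdiff.add_const _)
      (fun t => by rw [deriv_add_const, hode]; ring) s (by simp [hs]) t
    linarith [key]
  have hv : ∀ t, H t + H₀ ≠ 0 := fun t h => hne2 t (by linarith)
  have hu0 : ∀ t, H t - H₀ ≠ 0 := fun t h => hne1 t (by linarith)
  set w : ℝ → ℝ := fun t => (H t - H₀) / (H t + H₀) with hwdef
  have hw : ∀ t, HasDerivAt w (2 * A * H₀ * w t) t := by
    intro t
    have hnum : HasDerivAt (fun t => H t - H₀) (deriv H t) t := by
      simpa using ((hdiff t).hasDerivAt).sub_const H₀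
    have hden : HasDerivAt (fun t => H t + H₀) (deriv H t) t := by
      simpa using ((hdiff t).hasDerivAt).add_const H₀
    have h : HasDerivAt (fun t => (H t - H₀) / (H t + H₀)) ((deriv H t * (H t + H₀) - (H t - H₀) * deriv H t) / (H t + H₀) ^ 2) t := hnum.div hden (hv t)
    convert h using 1
    simp only [hwdef]
    rw [hode]
    field_simp [hv t]
    ring
  have hweq : ∀ t, w t = w 0 * Real.exp (2 * A * H₀ * t) :=
    cpo_eq_mul_exp _ w (fun t => (hw t).differentiableAt)
      (fun t => by rw [(hw t).deriv])
  have hc2 : 2 * A * H₀ ≠ 0 := by positivity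
  have hw0ne : w 0 ≠ 0 := div_ne_zero (hu0 0) (hv 0)
  -- w 0 must be negative
  have hw0neg : w 0 < 0 := by
    rcases lt_or_gt_of_ne hw0ne with h | h
    · exact h
    · exfalso
      set t := -Real.log (w 0) / (2 * A * H₀) with htdef
      have : w t = 1 := by
        rw [hweq t, htdef]
        rw [mul_div_assoc']
        rw [mul_comm (2 * A * H₀) (-Real.log (w 0))]
        rw [mul_div_assoc, div_self hc2, mul_one]
        rw [Real.exp_neg, Real.exp_log h]
        field_simp
      have h1 : H t - H₀ = H t + H₀ := by
        have := (div_eq_one_iff_eq (hv t)).mp this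
        exact this
      linarith
  set t₀ : ℝ := -Real.log (-(w 0)) / (2 * A * H₀) with ht₀def
  refine ⟨t₀, fun t => ?_⟩
  have hE : Real.exp (2 * A * H₀ * (t - t₀)) = -(w t) := by
    rw [hweq t]
    have h1 : 2 * A * H₀ * (t - t₀) = 2 * A * H₀ * t + Real.log (-(w 0)) := by
      rw [ht₀def]; field_simp; ring
    rw [h1, Real.exp_add, Real.exp_log (by linarith)]
    ring
  set x : ℝ := A * H₀ * (t - t₀) with hxdef
  have hx2 : 2 * A * H₀ * (t - t₀) = x + x := by rw [hxdef]; ring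
  have hexp2 : Real.exp x * Real.exp x = -(w t) := by
    rw [← Real.exp_add, ← hx2, hE]
  have hwrel : H t - H₀ = w t * (H t + H₀) := by
    simp only [hwdef]
    rw [div_mul_cancel₀ _ (hv t)]
  -- now prove the target
  rw [Real.tanh_eq_sinh_div_cosh, Real.sinh_eq, Real.cosh_eq]
  have hp := Real.exp_pos x
  have hq := Real.exp_pos (-x)
  have hpq : Real.exp x * Real.exp (-x) = 1 := by rw [← Real.exp_add]; simp
  have hden : Real.exp x + Real.exp (-x) ≠ 0 := by positivity
  set p := Real.exp x
  set q := Real.exp (-x)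
  -- H t * (1 + p*p) = H₀ * (1 - p*p)
  have hkey : H t * (1 + p * p) = H₀ * (1 - p * p) := by
    have hwt : w t = -(p * p) := by linarith [hexp2]
    have : H t - H₀ = -(p * p) * (H t + H₀) := by rw [hwrel, hwt]
    nlinarith [this]
  have h3 : (H t * (p + q) + H₀ * (p - q)) * p = 0 := by
    linear_combination hkey + (H t - H₀) * hpq
  have h4 : H t * (p + q) + H₀ * (p - q) = 0 :=
    (mul_eq_zero.mp h3).resolve_right (ne_of_gt hp)
  field_simp
  linarith [h4]
end

section
/- Let m > 0 and let H : (0,∞) → ℝ be continuous with H(t) > 0 for all t > 0 and lim_{t→0⁺} ∫_t^{t₁} H(u) du = +∞ for every t₁ > 0. Fix t₁ > 0 and z₁ ∈ (0,1), and let z be the solution of the ODE z'(t) = (H(t)/2)(1 − z²) + (z/(4m))(1 − z²)² with z(t₁) = z₁, continued backward in t on the maximal interval on which z takes values in (0,1). Then this maximal interval has a left endpoint t₀ with 0 < t₀ < t₁, and lim_{t→t₀⁺} z(t) = 0. -/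
open Real Filter Set

/-- Derivative in `x` of the McVittie right-hand side. -/
lemma mcv_hasDerivAt_x (c m x : ℝ) :
    HasDerivAt (fun y : ℝ => c / 2 * (1 - y^2) + y/(4*m) * (1 - y^2)^2)
      (-(c*x) + ((1 - x^2)^2/(4*m) - x^2*(1-x^2)/m)) x := by
  have h1 : HasDerivAt (fun y : ℝ => 1 - y^2) (-(2*x)) x := by
    simpa using (hasDerivAt_pow 2 x).const_sub 1
  have h2 := h1.const_mul (c/2)
  have h3 : HasDerivAt (fun y : ℝ => y/(4*m)) (1/(4*m)) x := by
    simpa using (hasDerivAt_id x).div_const (4*m)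
  have h5 := h3.fun_mul (h1.fun_pow 2)
  exact (h2.fun_add h5).congr_deriv (by push_cast; ring)

set_option maxHeartbeats 2000000 in
/-- (Lemma 2, backward in time.) Let `m > 0` and let `H` be continuous and
positive on `(0,∞)` with `∫_t^{t₁} H → +∞` as `t → 0⁺` for every `t₁ > 0`. Fix `t₁ > 0`,
`z₁ ∈ (0,1)`, and let `z` solve `z' = (H/2)(1 − z²) + (z/(4m))(1 − z²)²` with `z(t₁) = z₁`,
continued backward on the maximal interval `(t₀, t₁]` on which `z` takes values in `(0,1)`.
Then the left endpoint satisfies `0 < t₀ < t₁` and `z(t) → 0` as `t → t₀⁺`. -/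
theorem orng_originates_at_singularity
    (m t₁ z₁ : ℝ) (hm : 0 < m) (H : ℝ → ℝ)
    (hHcont : ContinuousOn H (Set.Ioi 0))
    (hHpos : ∀ t > 0, 0 < H t)
    (hbb : ∀ T > 0, Tendsto (fun t => ∫ u in t..T, H u) (nhdsWithin 0 (Set.Ioi 0)) atTop)
    (ht₁ : 0 < t₁) (hz₁ : z₁ ∈ Set.Ioo (0:ℝ) 1)
    (t₀ : ℝ) (ht₀0 : 0 ≤ t₀) (ht₀1 : t₀ < t₁) (z : ℝ → ℝ)
    (hode : ∀ t ∈ Set.Ioc t₀ t₁,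
      HasDerivAt z (H t / 2 * (1 - (z t)^2) + z t / (4*m) * (1 - (z t)^2)^2) t)
    (hrange : ∀ t ∈ Set.Ioc t₀ t₁, z t ∈ Set.Ioo (0:ℝ) 1)
    (hinit : z t₁ = z₁)
    (hmax : ¬ ∃ (t₀' : ℝ) (w : ℝ → ℝ), 0 ≤ t₀' ∧ t₀' < t₀ ∧
      (∀ t ∈ Set.Ioc t₀' t₁,
        HasDerivAt w (H t / 2 * (1 - (w t)^2) + w t / (4*m) * (1 - (w t)^2)^2) t) ∧
      (∀ t ∈ Set.Ioc t₀' t₁, w t ∈ Set.Ioo (0:ℝ) 1) ∧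
      (∀ t ∈ Set.Ioc t₀ t₁, w t = z t)) :
    0 < t₀ ∧ Tendsto z (nhdsWithin t₀ (Set.Ioi t₀)) (nhds 0) := by
  obtain ⟨hz₁0, hz₁1⟩ := hz₁
  -- continuity of z
  have hzc : ContinuousOn z (Ioc t₀ t₁) := fun t ht =>
    ((hode t ht).continuousAt).continuousWithinAt
  -- monotonicity of z
  have hmono : MonotoneOn z (Ioc t₀ t₁) := by
    apply (strictMonoOn_of_deriv_pos (convex_Ioc t₀ t₁) hzc ?_).monotoneOn
    intro x hx
    rw [interior_Ioc] at hx
    have hx' : x ∈ Ioc t₀ t₁ := Ioo_subset_Ioc_self hx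
    rw [(hode x hx').deriv]
    have hz := hrange x hx'
    have hH := hHpos x (lt_of_le_of_lt ht₀0 hx.1)
    have h1 : 0 < 1 - (z x)^2 := by nlinarith [hz.1, hz.2]
    have h2 : 0 < H x / 2 * (1 - (z x)^2) := by positivity
    have h3 : 0 < z x / (4*m) * (1 - (z x)^2)^2 :=
      mul_pos (div_pos hz.1 (by linarith)) (pow_pos h1 2)
    linarith
  -- the limit L at t₀⁺
  have hne : (Ioo t₀ t₁).Nonempty := nonempty_Ioo.2 ht₀1
  have hbdd : BddBelow (z '' Ioo t₀ t₁) := by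
    refine ⟨0, fun y hy => ?_⟩
    obtain ⟨x, hx, rfl⟩ := hy
    exact (hrange x (Ioo_subset_Ioc_self hx)).1.le
  set L := sInf (z '' Ioo t₀ t₁) with hLdef
  have hLz : Tendsto z (nhdsWithin t₀ (Ioi t₀)) (nhds L) :=
    MonotoneOn.tendsto_nhdsWithin_Ioo_right hne
      (hmono.mono Ioo_subset_Ioc_self) hbdd
  have hL0 : 0 ≤ L := by
    refine le_csInf (hne.image z) (fun y hy => ?_)
    obtain ⟨x, hx, rfl⟩ := hy
    exact (hrange x (Ioo_subset_Ioc_self hx)).1.le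
  have hL1 : L < 1 := by
    obtain ⟨x, hx⟩ := hne
    exact lt_of_le_of_lt (csInf_le hbdd (mem_image_of_mem z hx))
      (hrange x (Ioo_subset_Ioc_self hx)).2
  -- Step 1 : 0 < t₀
  have ht₀pos : 0 < t₀ := by
    rcases ht₀0.lt_or_eq with h | h
    · exact h
    exfalso
    -- t₀ = 0
    have key : ∀ t ∈ Ioo (0:ℝ) t₁, (1/2) * ∫ u in t..t₁, H u ≤ -Real.log (1 - z₁) := by
      rintro t ⟨ht0, htt₁⟩
      have hsub : Icc t t₁ ⊆ Ioc t₀ t₁ := fun s hs => ⟨h ▸ lt_of_lt_of_le ht0 hs.1, hs.2⟩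
      set ψ : ℝ → ℝ := fun s => Real.log (1 - z s) + (1/2) * ∫ u in t₁..s, H u with hψdef
      have hψd : ∀ s ∈ Icc t t₁, HasDerivAt ψ
          (-(H s / 2 * (1 - (z s)^2) + z s / (4*m) * (1 - (z s)^2)^2)/(1 - z s)
            + (1/2) * H s) s := by
        intro s hs
        have hs' : s ∈ Ioc t₀ t₁ := hsub hs
        have hzr := hrange s hs'
        have h1z : 0 < 1 - z s := by linarith [hzr.2]
        have hs0 : (0:ℝ) < s := lt_of_lt_of_le ht0 hs.1
        have hlog : HasDerivAt (fun y => Real.log (1 - z y))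
            (-(H s / 2 * (1 - (z s)^2) + z s / (4*m) * (1 - (z s)^2)^2)/(1 - z s)) s :=
          (((hode s hs').const_sub 1).log (ne_of_gt h1z))
        have hint : HasDerivAt (fun y => ∫ u in t₁..y, H u) (H s) s := by
          apply intervalIntegral.integral_hasDerivAt_right
          · apply ContinuousOn.intervalIntegrable
            apply hHcont.mono
            intro u hu
            exact lt_of_lt_of_le (lt_min ht₁ hs0) hu.1
          · exact (hHcont.stronglyMeasurableAtFilter isOpen_Ioi) s hs0
          · exact hHcont.continuousAt (Ioi_mem_nhds hs0)
        exact hlog.add (hint.const_mul (1/2))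
      have hanti : AntitoneOn ψ (Icc t t₁) := by
        apply antitoneOn_of_deriv_nonpos (convex_Icc t t₁)
        · exact fun s hs => (hψd s hs).continuousAt.continuousWithinAt
        · exact fun s hs =>
            ((hψd s (interior_subset hs)).differentiableAt).differentiableWithinAt
        · intro s hs
          rw [interior_Icc] at hs
          have hs' : s ∈ Icc t t₁ := Ioo_subset_Icc_self hs
          rw [(hψd s hs').deriv]
          have hzr := hrange s (hsub hs')
          have h1z : 0 < 1 - z s := by linarith [hzr.2]
          have hH := hHpos s (lt_of_lt_of_le ht0 hs'.1)
          have hq : 0 ≤ z s / (4*m) * (1 - (z s)^2)^2 :=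
            mul_nonneg (div_nonneg hzr.1.le (by linarith)) (sq_nonneg _)
          have h2 : (1/2) * H s ≤
              (H s / 2 * (1 - (z s)^2) + z s / (4*m) * (1 - (z s)^2)^2) / (1 - z s) := by
            rw [le_div_iff₀ h1z]
            nlinarith [mul_nonneg (mul_nonneg hH.le hzr.1.le) (sub_nonneg.2 hzr.2.le)]
          rw [neg_div]
          linarith
      have hψle : ψ t₁ ≤ ψ t :=
        hanti (left_mem_Icc.2 htt₁.le) (right_mem_Icc.2 htt₁.le) htt₁.le
      have he1 : ψ t₁ = Real.log (1 - z₁) := by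
        simp [hψdef, intervalIntegral.integral_same, hinit]
      have he2 : ψ t = Real.log (1 - z t) - (1/2) * ∫ u in t..t₁, H u := by
        rw [hψdef]
        simp only []
        rw [intervalIntegral.integral_symm t t₁]
        ring
      have hzr := hrange t (hsub (left_mem_Icc.2 htt₁.le))
      have hlog_le : Real.log (1 - z t) ≤ 0 :=
        Real.log_nonpos (by linarith [hzr.2]) (by linarith [hzr.1])
      rw [he1, he2] at hψle
      linarith
    -- contradiction with the big-bang condition
    have hev1 : ∀ᶠ t in nhdsWithin (0:ℝ) (Ioi 0),
        (2 * (-Real.log (1 - z₁)) + 1) < ∫ u in t..t₁, H u :=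
      (hbb t₁ ht₁).eventually_gt_atTop _
    have hev2 : ∀ᶠ t in nhdsWithin (0:ℝ) (Ioi 0), t < t₁ :=
      eventually_nhdsWithin_of_eventually_nhds (Filter.Tendsto.eventually_lt_const ht₁ tendsto_id)
    have hev3 : ∀ᶠ t in nhdsWithin (0:ℝ) (Ioi 0), t ∈ Ioi (0:ℝ) :=
      eventually_mem_nhdsWithin
    obtain ⟨t, h1, h2, h3⟩ := (hev1.and (hev2.and hev3)).exists
    have := key t ⟨h3, h2⟩
    linarith
  refine ⟨ht₀pos, ?_⟩
  -- Step 2 : L = 0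
  have hLeq : L = 0 := by
    by_contra hLne
    have hLpos : 0 < L := hL0.lt_of_ne (Ne.symm hLne)
    apply hmax
    -- parameters for Picard–Lindelöf
    set ε : ℝ := min L (1 - L) / 2 with hεdef
    have hε : 0 < ε := by
      have := lt_min hLpos (by linarith : (0:ℝ) < 1 - L)
      positivity
    have hball : Metric.closedBall L ε ⊆ Ioo (0:ℝ) 1 := by
      intro x hx
      rw [Real.closedBall_eq_Icc] at hx
      have h1 := min_le_left L (1 - L)
      have h2 := min_le_right L (1 - L)
      constructor
      · have := hx.1; simp only [hεdef] at this ⊢; linarith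
      · have := hx.2; simp only [hεdef] at this ⊢; linarith
    have hIccsub : Icc (t₀/2) t₀ ⊆ Ioi (0:ℝ) :=
      fun s hs => lt_of_lt_of_le (by linarith) hs.1
    obtain ⟨M₀, hM₀⟩ := (isCompact_Icc :
      IsCompact (Icc (t₀/2) t₀)).exists_bound_of_continuousOn (hHcont.mono hIccsub)
    set M : ℝ := max M₀ 0 with hMdef
    have hM : ∀ s ∈ Icc (t₀/2) t₀, |H s| ≤ M := fun s hs =>
      le_trans (by simpa [Real.norm_eq_abs] using hM₀ s hs) (le_max_left _ _)
    have hM0 : 0 ≤ M := le_max_right _ _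
    set C : ℝ := M/2 + 1/(4*m) with hCdef
    have hC : 0 < C := by positivity
    set Kr : ℝ := M + 2/m with hKrdef
    have hKr : 0 ≤ Kr := by positivity
    set tMin : ℝ := max (t₀/2) (t₀ - ε/C) with htMindef
    have htMin1 : tMin < t₀ := max_lt (by linarith) (by linarith [div_pos hε hC])
    have htMin0 : 0 < tMin := lt_of_lt_of_le (by linarith) (le_max_left _ _)
    have hIcc2 : Icc tMin t₀ ⊆ Icc (t₀/2) t₀ :=
      fun s hs => ⟨le_trans (le_max_left _ _) hs.1, hs.2⟩
    have hball' : ∀ x ∈ Metric.closedBall L ε, 0 ≤ x ∧ x ≤ 1 :=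
      fun x hx => ⟨(hball hx).1.le, (hball hx).2.le⟩
    -- the Picard–Lindelöf structure
    have hpl : IsPicardLindelof
        (fun t x => H t / 2 * (1 - x^2) + x / (4*m) * (1 - x^2)^2)
        (tmin := tMin) (tmax := t₀) ⟨t₀, htMin1.le, le_refl _⟩ L ⟨ε, hε.le⟩ 0 ⟨C, hC.le⟩
        (Real.toNNReal Kr) := by
      constructor
      · -- Lipschitz
        intro t ht
        apply (convex_closedBall L ε).lipschitzOnWith_of_nnnorm_hasDerivWithin_le
          (f' := fun x => -(H t * x) + ((1 - x^2)^2/(4*m) - x^2*(1-x^2)/m))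
          (fun x _ => (mcv_hasDerivAt_x (H t) m x).hasDerivWithinAt)
        intro x hx
        rw [← NNReal.coe_le_coe, coe_nnnorm, Real.coe_toNNReal _ hKr, Real.norm_eq_abs]
        obtain ⟨hx0, hx1⟩ := hball' x hx
        have habs := abs_le.1 (hM t (hIcc2 ht))
        have h1x2 : 0 ≤ 1 - x^2 := by nlinarith
        have h1x2' : 1 - x^2 ≤ 1 := by nlinarith [sq_nonneg x]
        have a1 : (1 - x^2)^2/(4*m) ≤ 1/(4*m) :=
          (div_le_div_iff_of_pos_right (by linarith : (0:ℝ) < 4*m)).2 (by nlinarith)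
        have a2 : 0 ≤ x^2*(1-x^2)/m := div_nonneg (mul_nonneg (sq_nonneg x) h1x2) hm.le
        have a3 : 1/(4*m) ≤ 2/m := by
          rw [div_le_div_iff₀ (by linarith) hm]; linarith
        have a4 : -(H t * x) ≤ M := by
          nlinarith [mul_nonneg (by linarith : (0:ℝ) ≤ M + H t) hx0,
            mul_nonneg hM0 (by linarith : (0:ℝ) ≤ 1 - x)]
        have b1 : H t * x ≤ M := by
          nlinarith [mul_nonneg (by linarith : (0:ℝ) ≤ M - H t) hx0,
            mul_nonneg hM0 (by linarith : (0:ℝ) ≤ 1 - x)]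
        have b2 : 0 ≤ (1 - x^2)^2/(4*m) := by positivity
        have b3 : x^2*(1-x^2)/m ≤ 2/m :=
          (div_le_div_iff_of_pos_right hm).2 (by nlinarith [sq_nonneg x])
        rw [abs_le]
        constructor
        · simp only [hKrdef]; linarith
        · simp only [hKrdef]; linarith
      · -- continuity in t
        intro x _
        apply ContinuousOn.add
        · exact ((hHcont.mono (fun s hs => hIccsub (hIcc2 hs))).div_const 2).mul
            continuousOn_const
        · exact continuousOn_const
      · -- norm bound
        intro t ht x hx
        show ‖_‖ ≤ C
        rw [Real.norm_eq_abs]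
        obtain ⟨hx0, hx1⟩ := hball' x hx
        have habs := abs_le.1 (hM t (hIcc2 ht))
        have h1x2 : 0 ≤ 1 - x^2 := by nlinarith
        have h1x2' : 1 - x^2 ≤ 1 := by nlinarith [sq_nonneg x]
        have c0 : x / (4*m) * (1 - x^2)^2 = x * (1 - x^2)^2 / (4*m) := by ring
        have c1 : x / (4*m) * (1 - x^2)^2 ≤ 1/(4*m) := by
          rw [c0]
          exact (div_le_div_iff_of_pos_right (by linarith : (0:ℝ) < 4*m)).2 (by nlinarith)
        have c2 : 0 ≤ x / (4*m) * (1 - x^2)^2 := by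
          rw [c0]
          exact div_nonneg (mul_nonneg hx0 (sq_nonneg _)) (by linarith)
        have c3 : H t / 2 * (1 - x^2) ≤ M/2 := by
          nlinarith [mul_nonneg (by linarith : (0:ℝ) ≤ M - H t) h1x2, hM0]
        have c4 : -(M/2) ≤ H t / 2 * (1 - x^2) := by
          nlinarith [mul_nonneg (by linarith : (0:ℝ) ≤ M + H t) h1x2, hM0]
        rw [abs_le]
        constructor
        · simp only [hCdef]; nlinarith [div_pos (by norm_num : (0:ℝ) < 1) (by linarith : (0:ℝ) < 4*m)]
        · simp only [hCdef]; linarith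
      · -- C * max ... ≤ R
        show C * max (t₀ - t₀) (t₀ - tMin) ≤ ε - 0
        rw [sub_zero]
        rw [sub_self]
        have h1 : t₀ - tMin ≤ ε/C := by
          have := le_max_right (t₀/2) (t₀ - ε/C)
          simp only [htMindef] at *
          linarith
        rw [max_eq_right (by linarith [htMin1.le] : (0:ℝ) ≤ t₀ - tMin)]
        calc C * (t₀ - tMin) ≤ C * (ε/C) := mul_le_mul_of_nonneg_left h1 hC.le
          _ = ε := by field_simp
    obtain ⟨α, hα0 : α t₀ = L, hα⟩ := hpl.exists_eq_forall_mem_Icc_hasDerivWithinAt₀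
    -- choose δ so that α stays in (0,1)
    have hc : ContinuousWithinAt α (Icc tMin t₀) t₀ :=
      (hα t₀ ⟨htMin1.le, le_refl _⟩).continuousWithinAt
    have hmemL : α t₀ ∈ Ioo (0:ℝ) 1 := by rw [hα0]; exact ⟨hLpos, hL1⟩
    have hev : α ⁻¹' Ioo (0:ℝ) 1 ∈ nhdsWithin t₀ (Icc tMin t₀) :=
      hc (isOpen_Ioo.mem_nhds hmemL)
    rw [Metric.mem_nhdsWithin_iff] at hev
    obtain ⟨δ, hδ, hδsub⟩ := hev
    set t₀' : ℝ := max tMin (t₀ - δ/2) with ht₀'def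
    have ht₀'lt : t₀' < t₀ := max_lt htMin1 (by linarith)
    have ht₀'0 : 0 ≤ t₀' := le_trans htMin0.le (le_max_left _ _)
    have hαmem : ∀ s ∈ Ioc t₀' t₀, α s ∈ Ioo (0:ℝ) 1 := by
      intro s hs
      apply hδsub
      constructor
      · rw [Metric.mem_ball, Real.dist_eq, abs_lt]
        have h1 : t₀ - δ/2 ≤ t₀' := le_max_right _ _
        constructor <;> [linarith [hs.1, hs.2]; linarith [hs.1, hs.2]]
      · exact ⟨le_trans (le_max_left _ _ : tMin ≤ t₀') hs.1.le, hs.2⟩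
    -- the extension w
    set w : ℝ → ℝ := fun s => if t₀ < s then z s else α s with hwdef
    have hwz_eq : ∀ s ∈ Ioc t₀ t₁, w s = z s := fun s hs => if_pos hs.1
    have hwα_eq : ∀ s, s ≤ t₀ → w s = α s := fun s hs => if_neg (not_lt.2 hs)
    have hwt₀ : w t₀ = L := by rw [hwα_eq t₀ (le_refl _), hα0]
    -- w satisfies the ODE on (t₀, t₁]
    have hwz : ∀ x ∈ Ioc t₀ t₁,
        HasDerivAt w (H x / 2 * (1 - (w x)^2) + w x / (4*m) * (1 - (w x)^2)^2) x := by
      intro x hx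
      have hev : w =ᶠ[nhds x] z := by
        filter_upwards [Ioi_mem_nhds hx.1] with s hs
        exact if_pos hs
      have h := (hode x hx).congr_of_eventuallyEq hev
      rw [hwz_eq x hx]
      exact h
    -- junction: derivative of w at t₀
    have hjun : HasDerivAt w
        (H t₀ / 2 * (1 - L^2) + L / (4*m) * (1 - L^2)^2) t₀ := by
      have hleft : HasDerivWithinAt w
          (H t₀ / 2 * (1 - L^2) + L / (4*m) * (1 - L^2)^2) (Iic t₀) t₀ := by
        have h1 : HasDerivWithinAt α
            (H t₀ / 2 * (1 - (α t₀)^2) + α t₀ / (4*m) * (1 - (α t₀)^2)^2)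
            (Icc tMin t₀) t₀ := hα t₀ ⟨htMin1.le, le_refl _⟩
        rw [hα0] at h1
        have h2 : HasDerivWithinAt w
            (H t₀ / 2 * (1 - L^2) + L / (4*m) * (1 - L^2)^2) (Icc tMin t₀) t₀ :=
          h1.congr (fun s hs => hwα_eq s hs.2) (hwα_eq t₀ (le_refl _))
        apply h2.mono_of_mem_nhdsWithin
        rw [← Set.Ici_inter_Iic]
        exact Filter.inter_mem
          (mem_nhdsWithin_of_mem_nhds (Ici_mem_nhds htMin1)) self_mem_nhdsWithin
      have hright : HasDerivWithinAt w
          (H t₀ / 2 * (1 - L^2) + L / (4*m) * (1 - L^2)^2) (Ici t₀) t₀ := by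
        apply hasDerivWithinAt_Ici_of_tendsto_deriv (s := Ioo t₀ t₁)
        · intro x hx
          exact ((hwz x (Ioo_subset_Ioc_self hx)).differentiableAt).differentiableWithinAt
        · -- continuity at t₀ within Ioo
          have h1 : Tendsto w (nhdsWithin t₀ (Ioo t₀ t₁)) (nhds L) := by
            apply Tendsto.congr' _ (hLz.mono_left (nhdsWithin_mono _ Ioo_subset_Ioi_self))
            filter_upwards [self_mem_nhdsWithin] with s hs
            exact (hwz_eq s (Ioo_subset_Ioc_self hs)).symm
          rwa [ContinuousWithinAt, hwt₀]
        · exact Ioo_mem_nhdsGT_of_mem ⟨le_refl t₀, ht₀1⟩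
        · -- derivative tends to the right value
          have hH_t : Tendsto H (nhdsWithin t₀ (Ioi t₀)) (nhds (H t₀)) :=
            (hHcont.continuousAt (Ioi_mem_nhds ht₀pos)).tendsto.mono_left
              nhdsWithin_le_nhds
          have htend : Tendsto (fun x => H x / 2 * (1 - (z x)^2)
              + z x / (4*m) * (1 - (z x)^2)^2) (nhdsWithin t₀ (Ioi t₀))
              (nhds (H t₀ / 2 * (1 - L^2) + L / (4*m) * (1 - L^2)^2)) := by
            apply Tendsto.add
            · exact (hH_t.div_const 2).mul (tendsto_const_nhds.sub (hLz.pow 2))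
            · exact (hLz.div_const (4*m)).mul
                ((tendsto_const_nhds.sub (hLz.pow 2)).pow 2)
          apply Tendsto.congr' _ htend
          filter_upwards [Ioo_mem_nhdsGT_of_mem ⟨le_refl t₀, ht₀1⟩] with x hx
          have h := hwz x (Ioo_subset_Ioc_self hx)
          rw [hwz_eq x (Ioo_subset_Ioc_self hx)] at h
          exact (h.deriv).symm
      have := hleft.union hright
      rw [Iic_union_Ici] at this
      exact hasDerivWithinAt_univ.1 this
    -- apply maximality
    refine ⟨t₀', w, ht₀'0, ht₀'lt, ?_, ?_, hwz_eq⟩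
    · -- the ODE on (t₀', t₁]
      intro t ht
      rcases lt_trichotomy t₀ t with hlt | heq | hgt
      · exact hwz t ⟨hlt, ht.2⟩
      · subst heq
        rw [hwt₀]
        exact hjun
      · -- t < t₀ : interior of the α-interval
        have htmem : t ∈ Ioo tMin t₀ :=
          ⟨lt_of_le_of_lt (le_max_left _ _ : tMin ≤ t₀') ht.1, hgt⟩
        have h1 : HasDerivAt α
            (H t / 2 * (1 - (α t)^2) + α t / (4*m) * (1 - (α t)^2)^2) t :=
          (hα t (Ioo_subset_Icc_self htmem)).hasDerivAt
            (Icc_mem_nhds htmem.1 htmem.2)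
        have hev : w =ᶠ[nhds t] α := by
          filter_upwards [Iio_mem_nhds hgt] with s hs
          exact if_neg (not_lt.2 (le_of_lt hs))
        have h2 := h1.congr_of_eventuallyEq hev
        rw [hwα_eq t hgt.le]
        exact h2
    · -- range of w
      intro t ht
      rcases lt_or_ge t₀ t with hlt | hle
      · rw [hwz_eq t ⟨hlt, ht.2⟩]
        exact hrange t ⟨hlt, ht.2⟩
      · rw [hwα_eq t hle]
        exact hαmem t ⟨ht.1, hle⟩
  rw [hLeq] at hLz
  exact hLz
end

section
/- Let m > 0 and let H : (0,∞) → ℝ be continuous with H(t) > 0 for all t > 0 and lim_{t→0⁺} ∫_t^{t₁} H(u) du = +∞ for every t₁ > 0. Fix t₁ > 0 and z₁ ∈ (0,1), and let z be the solution of the ODE z'(t) = (H(t)/2)(1 − z²) − (z/(4m))(1 − z²)² with z(t₁) = z₁, continued backward in t on the maximal interval on which z takes values in (0,1). Then this maximal interval has a left endpoint t₀ with 0 < t₀ < t₁, and lim_{t→t₀⁺} z(t) = 0. -/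
open Real Filter Set

open MeasureTheory

section McVittieHelpers

variable {H z : ℝ → ℝ} {m t₁ : ℝ}

private lemma mcv_contOn_G (m : ℝ) {s : Set ℝ} (hH : ContinuousOn H s)
    (hz : ContinuousOn z s) :
    ContinuousOn (fun t => H t / 2 * (1 - (z t)^2) - z t / (4*m) * (1 - (z t)^2)^2) s := by
  have h2 : ContinuousOn (fun t => 1 - (z t)^2) s := continuousOn_const.sub (hz.pow 2)
  exact ((hH.div_const 2).mul h2).sub ((hz.div_const (4*m)).mul (h2.pow 2))

private lemma mcv_hasDerivAt_field (h m x : ℝ) :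
    HasDerivAt (fun y : ℝ => h/2*(1-y^2) - y/(4*m)*(1-y^2)^2)
      (-(h*x) - (1-x^2)*(1-5*x^2)/(4*m)) x := by
  have h2 : HasDerivAt (fun y : ℝ => 1 - y^2) (-(2*x)) x := by
    simpa using ((hasDerivAt_pow 2 x).const_sub 1)
  have h4 := ((hasDerivAt_id x).div_const (4*m)).mul (h2.pow 2)
  have h5 := (h2.const_mul (h/2)).sub h4
  refine h5.congr_deriv ?_
  simp only [pow_one, Nat.cast_ofNat, id_eq, Pi.pow_apply]
  push_cast
  ring

private lemma mcv_ineq_A {h m x : ℝ} (hm : 0 < m) (hh : 0 < h) (hx0 : 0 < x) (hx1 : x < 1) :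
    h/2 - 1/(4*m) ≤ (h/2*(1-x^2) - x/(4*m)*(1-x^2)^2) / (1 - x) := by
  rw [le_div_iff₀ (by linarith)]
  have key : (h/2*(1-x^2) - x/(4*m)*(1-x^2)^2) - (h/2 - 1/(4*m))*(1-x)
      = (h/2)*(x*(1-x)) + (1/(4*m))*((1-x)*(1 - x*(1-x)*(1+x)^2)) := by
    field_simp
    ring
  have e1 : 0 ≤ x*(1-x) := by nlinarith
  have e2 : 4*(x*(1-x)) ≤ 1 := by nlinarith [sq_nonneg (1-2*x)]
  have e3 : (1+x)^2 ≤ 4 := by nlinarith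
  have e4 : x*(1-x)*(1+x)^2 ≤ 1 := by nlinarith [mul_le_mul_of_nonneg_left e3 e1]
  have e5 : 0 ≤ (1-x)*(1 - x*(1-x)*(1+x)^2) := by nlinarith
  have e6 : 0 ≤ (h/2)*(x*(1-x)) := by positivity
  have e7 : 0 ≤ (1/(4*m))*((1-x)*(1 - x*(1-x)*(1+x)^2)) := by positivity
  linarith [key]

private lemma mcv_G_bound {h m x CH : ℝ} (hm : 0 < m) (hh : |h| ≤ CH)
    (hx0 : 0 ≤ x) (hx1 : x ≤ 1) :
    |h/2*(1-x^2) - x/(4*m)*(1-x^2)^2| ≤ CH/2 + 1/(4*m) := by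
  rw [abs_le] at hh ⊢
  have h1 : 0 ≤ 1 - x^2 := by nlinarith
  have h2 : 1 - x^2 ≤ 1 := by nlinarith
  have h4 : x * (1-x^2)^2 ≤ 1 := by nlinarith
  have hub : x/(4*m)*(1-x^2)^2 ≤ 1/(4*m) := by
    rw [show x/(4*m)*(1-x^2)^2 = x*(1-x^2)^2/(4*m) by ring]
    gcongr
  have hlb : 0 ≤ x/(4*m)*(1-x^2)^2 := by positivity
  have e1 : h/2*(1-x^2) ≤ CH/2 := by nlinarith [mul_nonneg (sub_nonneg.mpr hh.2) h1]
  have e0 : -(CH/2) ≤ h/2*(1-x^2) := by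
    nlinarith [mul_nonneg (by linarith : (0:ℝ) ≤ h + CH) h1,
      mul_nonneg (by linarith : (0:ℝ) ≤ CH + h) h1]
  constructor <;> linarith

private lemma mcv_deriv_bound {h m x CH : ℝ} (hm : 0 < m) (hh : |h| ≤ CH)
    (hx0 : 0 ≤ x) (hx1 : x ≤ 1) :
    |-(h*x) - (1-x^2)*(1-5*x^2)/(4*m)| ≤ CH + 1/m := by
  rw [abs_le] at hh ⊢
  have hCH0 : 0 ≤ CH := by linarith [hh.1, hh.2]
  have hm4 : (0:ℝ) < 4*m := by linarith
  have hb1 : h*x ≤ CH := by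
    nlinarith [mul_nonneg (sub_nonneg.2 hh.2) hx0, mul_nonneg hCH0 (sub_nonneg.2 hx1)]
  have hb2 : -CH ≤ h*x := by
    nlinarith [mul_nonneg (by linarith [hh.1] : (0:ℝ) ≤ h + CH) hx0,
      mul_nonneg hCH0 (sub_nonneg.2 hx1)]
  have k1 : (1-x^2)*(1-5*x^2)/(4*m) ≤ 1/(4*m) := by
    apply (div_le_div_iff_of_pos_right hm4).mpr
    nlinarith [mul_nonneg (sq_nonneg x) (by nlinarith : (0:ℝ) ≤ 1 - x^2)]
  have k2 : -(4:ℝ)/(4*m) ≤ (1-x^2)*(1-5*x^2)/(4*m) := by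
    apply (div_le_div_iff_of_pos_right hm4).mpr
    nlinarith [sq_nonneg (x^2-1), sq_nonneg x]
  have k3 : (4:ℝ)/(4*m) = 1/m := by field_simp
  have k4 : (1:ℝ)/(4*m) ≤ 1/m := by
    rw [← k3]; apply (div_le_div_iff_of_pos_right hm4).mpr; norm_num
  have k5 : -(4:ℝ)/(4*m) = -(1/m) := by rw [neg_div, k3]
  constructor <;> linarith

private lemma mcv_ineq_D {h h₀ m x : ℝ} (hm : 0 < m) (hh₀ : 0 < h₀) (hh : h₀/2 < h)
    (hx0 : 0 < x) (hx1 : x < 1) (hxc : 1 - m*h₀/2 < x) :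
    0 < h/2*(1-x^2) - x/(4*m)*(1-x^2)^2 := by
  have h1 : 0 < 1 - x^2 := by nlinarith
  rw [show h/2*(1-x^2) - x/(4*m)*(1-x^2)^2 = (1-x^2)*(h/2 - x*(1-x^2)/(4*m)) by ring]
  apply mul_pos h1
  rw [sub_pos, div_lt_iff₀ (by linarith)]
  have e1 : x*(1+x) ≤ 2 := by nlinarith
  have e2 : x*(1-x^2) ≤ 2*(1-x) := by
    nlinarith [mul_nonneg (sub_nonneg.2 hx1.le) (sub_nonneg.2 e1)]
  nlinarith [mul_lt_mul_of_pos_left hh (by linarith : (0:ℝ) < 2*m)]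

open ODE in
private lemma mcv_pl_solution {f : ℝ → ℝ → ℝ} {tmin tmax : ℝ} {t₀ : Icc tmin tmax} {x₀ : ℝ}
    {a L K : NNReal} (hf : IsPicardLindelof f t₀ x₀ a 0 L K) :
    ∃ g : ℝ → ℝ, g t₀ = x₀ ∧ (∀ t ∈ Icc tmin tmax, g t ∈ Metric.closedBall x₀ a) ∧
      ∀ t ∈ Icc tmin tmax, HasDerivWithinAt g (f t (g t)) (Icc tmin tmax) t := by
  obtain ⟨α, hα⟩ := FunSpace.exists_isFixedPt_next hf (Metric.mem_closedBall_self le_rfl)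
  refine ⟨α.compProj, by rw [FunSpace.compProj_val, ← hα, FunSpace.next_apply₀],
    fun t _ => α.compProj_mem_closedBall hf.mul_max_le, fun t ht => ?_⟩
  apply hasDerivWithinAt_picard_Icc t₀.2 hf.continuousOn_uncurry
    α.continuous_compProj.continuousOn (fun _ ht' ↦ α.compProj_mem_closedBall hf.mul_max_le)
    x₀ ht |>.congr_of_mem _ ht
  intro t' ht'
  nth_rw 1 [← hα]
  rw [FunSpace.compProj_of_mem ht', FunSpace.next_apply]

private lemma mcv_part_A (hm : 0 < m)
    (hHcont : ContinuousOn H (Set.Ioi 0))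
    (hHpos : ∀ t > 0, 0 < H t)
    (hbb : Tendsto (fun t => ∫ u in t..t₁, H u) (nhdsWithin 0 (Set.Ioi 0)) atTop)
    (ht₁ : 0 < t₁)
    (hode : ∀ t ∈ Set.Ioc (0:ℝ) t₁,
      HasDerivAt z (H t / 2 * (1 - (z t)^2) - z t / (4*m) * (1 - (z t)^2)^2) t)
    (hrange : ∀ t ∈ Set.Ioc (0:ℝ) t₁, z t ∈ Set.Ioo (0:ℝ) 1) : False := by
  set v : ℝ → ℝ := fun s => -Real.log (1 - z s) with hv_def
  have hzc : ContinuousOn z (Ioc 0 t₁) :=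
    fun t ht => ((hode t ht).continuousAt).continuousWithinAt
  have key : ∀ t ∈ Ioc (0:ℝ) t₁, (∫ u in t..t₁, H u)/2 - t₁/(4*m) ≤ v t₁ := by
    intro t ht
    have hsub : Icc t t₁ ⊆ Ioc 0 t₁ := fun s hs => ⟨lt_of_lt_of_le ht.1 hs.1, hs.2⟩
    have hHc' : ContinuousOn H (Icc t t₁) :=
      hHcont.mono (fun s hs => lt_of_lt_of_le ht.1 hs.1)
    have hzc' : ContinuousOn z (Icc t t₁) := hzc.mono hsub
    have hne : ∀ s ∈ Icc t t₁, (1:ℝ) - z s ≠ 0 := fun s hs =>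
      ne_of_gt (by linarith [(hrange s (hsub hs)).2])
    have hv : ∀ s ∈ Icc t t₁, HasDerivAt v
        ((H s / 2 * (1 - (z s)^2) - z s / (4*m) * (1 - (z s)^2)^2) / (1 - z s)) s := by
      intro s hs
      have h2 := (((hasDerivAt_const s (1:ℝ)).sub (hode s (hsub hs))).log (hne s hs)).neg
      refine h2.congr_deriv ?_
      simp only [Pi.sub_apply]
      ring
    have hGc : ContinuousOn
        (fun s => (H s / 2 * (1 - (z s)^2) - z s / (4*m) * (1 - (z s)^2)^2) / (1 - z s))
        (Icc t t₁) := (mcv_contOn_G m hHc' hzc').div (continuousOn_const.sub hzc') hne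
    have hint1 := hGc.intervalIntegrable_of_Icc (μ := volume) ht.2
    have hint2 := (((hHc'.div_const 2).sub continuousOn_const).intervalIntegrable_of_Icc ht.2 :
      IntervalIntegrable (fun s => H s / 2 - 1/(4*m)) volume t t₁)
    have hH_int := hHc'.intervalIntegrable_of_Icc (μ := volume) ht.2
    have hFTC := intervalIntegral.integral_eq_sub_of_hasDerivAt
      (fun s hs => hv s (by rwa [uIcc_of_le ht.2] at hs)) hint1
    have hmono := intervalIntegral.integral_mono_on ht.2 hint2 hint1 (fun s hs => by
      have h1 := hrange s (hsub hs)
      exact mcv_ineq_A hm (hHpos s (lt_of_lt_of_le ht.1 hs.1)) h1.1 h1.2)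
    have hcalc : ∫ s in t..t₁, (H s/2 - 1/(4*m))
        = (∫ u in t..t₁, H u)/2 - (t₁ - t)*(1/(4*m)) := by
      rw [intervalIntegral.integral_sub (hH_int.div_const 2) intervalIntegrable_const]
      rw [intervalIntegral.integral_div, intervalIntegral.integral_const]
      simp [smul_eq_mul]
    have hvt : 0 < v t := by
      have h1 := hrange t ht
      exact neg_pos.mpr (Real.log_neg (by linarith [h1.2]) (by linarith [h1.1]))
    have hfrac : (t₁ - t)*(1/(4*m)) ≤ t₁/(4*m) := by
      have h1 : t₁ - t ≤ t₁ := by linarith [ht.1]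
      have h2 : (0:ℝ) < 1/(4*m) := by positivity
      calc (t₁ - t)*(1/(4*m)) ≤ t₁ * (1/(4*m)) := by nlinarith
        _ = t₁/(4*m) := by ring
    rw [hcalc] at hmono
    rw [hFTC] at hmono
    set I := (∫ u in t..t₁, H u) with hI
    set A := v t₁
    set B := v t
    set X := (t₁ - t) * (1 / (4 * m))
    set Y := t₁ / (4 * m)
    clear_value I A B X Y
    linarith
  have hev1 : ∀ᶠ t in nhdsWithin (0:ℝ) (Set.Ioi 0),
      2*(v t₁ + t₁/(4*m)) + 1 ≤ ∫ u in t..t₁, H u := hbb.eventually (eventually_ge_atTop _)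
  have hev2 : ∀ᶠ t in nhdsWithin (0:ℝ) (Set.Ioi 0), t ∈ Ioc (0:ℝ) t₁ :=
    Ioc_mem_nhdsGT_of_mem ⟨le_rfl, ht₁⟩
  obtain ⟨t, h1, h2⟩ := (hev1.and hev2).exists
  have h3 := key t h2
  set I := (∫ u in t..t₁, H u) with hI
  set A := v t₁
  clear_value I A
  linarith

end McVittieHelpers


/-- (Lemma 3, backward in time.) Let `m > 0` and let `H` be continuous and
positive on `(0,∞)` with `∫_t^{t₁} H → +∞` as `t → 0⁺` for every `t₁ > 0`. Fix `t₁ > 0`,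
`z₁ ∈ (0,1)`, and let `z` solve `z' = (H/2)(1 − z²) − (z/(4m))(1 − z²)²` with `z(t₁) = z₁`,
continued backward on the maximal interval `(t₀, t₁]` on which `z` takes values in `(0,1)`.
Then the left endpoint satisfies `0 < t₀ < t₁` and `z(t) → 0` as `t → t₀⁺`. -/
theorem irng_originates_at_singularity
    (m t₁ z₁ : ℝ) (hm : 0 < m) (H : ℝ → ℝ)
    (hHcont : ContinuousOn H (Set.Ioi 0))
    (hHpos : ∀ t > 0, 0 < H t)
    (hbb : ∀ T > 0, Tendsto (fun t => ∫ u in t..T, H u) (nhdsWithin 0 (Set.Ioi 0)) atTop)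
    (ht₁ : 0 < t₁) (hz₁ : z₁ ∈ Set.Ioo (0:ℝ) 1)
    (t₀ : ℝ) (ht₀0 : 0 ≤ t₀) (ht₀1 : t₀ < t₁) (z : ℝ → ℝ)
    (hode : ∀ t ∈ Set.Ioc t₀ t₁,
      HasDerivAt z (H t / 2 * (1 - (z t)^2) - z t / (4*m) * (1 - (z t)^2)^2) t)
    (hrange : ∀ t ∈ Set.Ioc t₀ t₁, z t ∈ Set.Ioo (0:ℝ) 1)
    (hinit : z t₁ = z₁)
    (hmax : ¬ ∃ (t₀' : ℝ) (w : ℝ → ℝ), 0 ≤ t₀' ∧ t₀' < t₀ ∧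
      (∀ t ∈ Set.Ioc t₀' t₁,
        HasDerivAt w (H t / 2 * (1 - (w t)^2) - w t / (4*m) * (1 - (w t)^2)^2) t) ∧
      (∀ t ∈ Set.Ioc t₀' t₁, w t ∈ Set.Ioo (0:ℝ) 1) ∧
      (∀ t ∈ Set.Ioc t₀ t₁, w t = z t)) :
    0 < t₀ ∧ Tendsto z (nhdsWithin t₀ (Set.Ioi t₀)) (nhds 0) := by
  have hzc : ContinuousOn z (Ioc t₀ t₁) :=
    fun t ht => ((hode t ht).continuousAt).continuousWithinAt
  -- Part A : t₀ > 0
  have ht₀pos : 0 < t₀ := by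
    rcases ht₀0.lt_or_eq with h | h
    · exact h
    · exfalso
      subst h
      exact mcv_part_A hm hHcont hHpos (hbb t₁ ht₁) ht₁ hode hrange
  refine ⟨ht₀pos, ?_⟩
  -- Part B : existence of the limit L of z at t₀⁺
  have hsubIoi : Icc t₀ t₁ ⊆ Ioi 0 := fun s hs => lt_of_lt_of_le ht₀pos hs.1
  obtain ⟨CH₁, hCH₁⟩ := isCompact_Icc.exists_bound_of_continuousOn (hHcont.mono hsubIoi)
  have hGb : ∀ s ∈ Ioc t₀ t₁,
      |H s / 2 * (1 - (z s)^2) - z s / (4*m) * (1 - (z s)^2)^2| ≤ CH₁/2 + 1/(4*m) := by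
    intro s hs
    have h1 := hrange s hs
    have h2 := hCH₁ s (Ioc_subset_Icc_self hs)
    rw [Real.norm_eq_abs] at h2
    exact mcv_G_bound hm h2 h1.1.le h1.2.le
  have hGc : ContinuousOn
      (fun s => H s / 2 * (1 - (z s)^2) - z s / (4*m) * (1 - (z s)^2)^2) (Ioc t₀ t₁) :=
    mcv_contOn_G m (hHcont.mono (fun s hs => lt_of_lt_of_le ht₀pos hs.1.le)) hzc
  have hGint : IntegrableOn
      (fun s => H s / 2 * (1 - (z s)^2) - z s / (4*m) * (1 - (z s)^2)^2) (Ioc t₀ t₁) volume := by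
    refine Integrable.mono' (g := fun _ => CH₁/2 + 1/(4*m))
      (integrableOn_const measure_Ioc_lt_top.ne)
      (hGc.aestronglyMeasurable measurableSet_Ioc) ?_
    exact (ae_restrict_iff' measurableSet_Ioc).mpr (Eventually.of_forall (fun s hs => by
      rw [Real.norm_eq_abs]; exact hGb s hs))
  have hIIG : ∀ a b : ℝ, t₀ ≤ a → a ≤ b → b ≤ t₁ → IntervalIntegrable
      (fun s => H s / 2 * (1 - (z s)^2) - z s / (4*m) * (1 - (z s)^2)^2) volume a b := by
    intro a b ha hab hb
    rw [intervalIntegrable_iff_integrableOn_Ioc_of_le hab]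
    exact hGint.mono_set (Ioc_subset_Ioc ha hb)
  have hFTC : ∀ t ∈ Ioc t₀ t₁, z t = z t₁ -
      ∫ s in t..t₁, (H s / 2 * (1 - (z s)^2) - z s / (4*m) * (1 - (z s)^2)^2) := by
    intro t ht
    have h := intervalIntegral.integral_eq_sub_of_hasDerivAt
      (fun s hs => hode s (by rw [uIcc_of_le ht.2] at hs; exact ⟨lt_of_lt_of_le ht.1 hs.1, hs.2⟩))
      (hIIG t t₁ ht.1.le ht.2 le_rfl)
    set I := ∫ s in t..t₁, (H s / 2 * (1 - (z s)^2) - z s / (4*m) * (1 - (z s)^2)^2)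
    clear_value I
    linarith
  have hsmall : Tendsto
      (fun t => ∫ s in t₀..t, (H s / 2 * (1 - (z s)^2) - z s / (4*m) * (1 - (z s)^2)^2))
      (nhdsWithin t₀ (Ioi t₀)) (nhds 0) := by
    set Cb := |CH₁/2 + 1/(4*m)| + 1 with hCbdef
    have hb : ∀ᶠ t in nhdsWithin t₀ (Ioi t₀),
        ‖∫ s in t₀..t, (H s / 2 * (1 - (z s)^2) - z s / (4*m) * (1 - (z s)^2)^2)‖
          ≤ Cb * (t - t₀) := by
      filter_upwards [Ioc_mem_nhdsGT_of_mem ⟨le_rfl, ht₀1⟩] with t ht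
      have hbnd := intervalIntegral.norm_integral_le_of_norm_le_const (C := Cb)
        (f := fun s => H s / 2 * (1 - (z s)^2) - z s / (4*m) * (1 - (z s)^2)^2)
        (a := t₀) (b := t) (fun x hx => by
          rw [uIoc_of_le ht.1.le] at hx
          rw [Real.norm_eq_abs]
          exact le_trans (hGb x ⟨hx.1, le_trans hx.2 ht.2⟩)
            (by rw [hCbdef]; linarith [le_abs_self (CH₁/2 + 1/(4*m))]))
      rwa [abs_of_pos (by linarith [ht.1] : (0:ℝ) < t - t₀)] at hbnd
    have hg0 : Tendsto (fun t => Cb * (t - t₀)) (nhdsWithin t₀ (Ioi t₀)) (nhds 0) := by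
      have h1 : Tendsto (fun t : ℝ => Cb * (t - t₀)) (nhds t₀) (nhds (Cb * (t₀ - t₀))) :=
        (continuous_const.mul (continuous_id.sub continuous_const)).tendsto t₀
      simpa using h1.mono_left nhdsWithin_le_nhds
    exact squeeze_zero_norm' hb hg0
  obtain ⟨L, hlim⟩ : ∃ L, Tendsto z (nhdsWithin t₀ (Ioi t₀)) (nhds L) := by
    refine ⟨z t₁ - ∫ s in t₀..t₁, (H s / 2 * (1 - (z s)^2) - z s / (4*m) * (1 - (z s)^2)^2), ?_⟩
    have h1 : Tendsto (fun t => z t₁ -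
        ((∫ s in t₀..t₁, (H s / 2 * (1 - (z s)^2) - z s / (4*m) * (1 - (z s)^2)^2)) -
          ∫ s in t₀..t, (H s / 2 * (1 - (z s)^2) - z s / (4*m) * (1 - (z s)^2)^2)))
        (nhdsWithin t₀ (Ioi t₀))
        (nhds (z t₁ -
        ((∫ s in t₀..t₁, (H s / 2 * (1 - (z s)^2) - z s / (4*m) * (1 - (z s)^2)^2)) - 0))) :=
      tendsto_const_nhds.sub (tendsto_const_nhds.sub hsmall)
    rw [sub_zero] at h1
    refine h1.congr' ?_
    filter_upwards [Ioc_mem_nhdsGT_of_mem ⟨le_rfl, ht₀1⟩] with t ht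
    rw [hFTC t ht, ← intervalIntegral.integral_interval_sub_left
      (hIIG t₀ t₁ le_rfl ht₀1.le le_rfl) (hIIG t₀ t le_rfl ht.1.le ht.2)]
  have hL0 : 0 ≤ L := by
    refine ge_of_tendsto hlim ?_
    filter_upwards [Ioc_mem_nhdsGT_of_mem ⟨le_rfl, ht₀1⟩] with t ht
    exact (hrange t ht).1.le
  have hL1 : L ≤ 1 := by
    refine le_of_tendsto hlim ?_
    filter_upwards [Ioc_mem_nhdsGT_of_mem ⟨le_rfl, ht₀1⟩] with t ht
    exact (hrange t ht).2.le
  -- It suffices to show L = 0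
  suffices hfin : L = 0 by rw [← hfin]; exact hlim
  by_contra hLne
  have hLpos : 0 < L := hL0.lt_of_ne (Ne.symm hLne)
  rcases hL1.lt_or_eq with hLlt | hLeq
  -- Part E : 0 < L < 1 contradicts maximality via Picard–Lindelöf
  · apply hmax
    -- radius and bounds
    obtain ⟨r, hr0, h_r1, h_r2⟩ : ∃ r : ℝ, 0 < r ∧ r ≤ L/2 ∧ r ≤ (1-L)/2 := by
      refine ⟨min L (1-L) / 2, ?_, ?_, ?_⟩
      · have := lt_min hLpos (by linarith : (0:ℝ) < 1 - L); linarith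
      · have := min_le_left L (1-L); linarith
      · have := min_le_right L (1-L); linarith
    have hball : ∀ x : ℝ, x ∈ Metric.closedBall L r → 0 < x ∧ x < 1 := by
      intro x hx
      rw [Metric.mem_closedBall, Real.dist_eq, abs_le] at hx
      constructor <;> [linarith [hx.1]; linarith [hx.2]]
    -- bound on H near t₀
    obtain ⟨CH, hCH0, hCH⟩ : ∃ CH : ℝ, 0 ≤ CH ∧ ∀ x ∈ Icc (t₀/2) t₁, |H x| ≤ CH := by
      obtain ⟨C₀, hC₀⟩ := isCompact_Icc.exists_bound_of_continuousOn
        (hHcont.mono (fun x (hx : x ∈ Icc (t₀/2) t₁) => lt_of_lt_of_le (by linarith) hx.1))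
      exact ⟨max C₀ 0, le_max_right _ _, fun x hx => le_trans
        (by rw [← Real.norm_eq_abs]; exact hC₀ x hx) (le_max_left _ _)⟩
    obtain ⟨Cb2, hCb2, hCb2eq⟩ : ∃ c : ℝ, 0 < c ∧ c = CH/2 + 1/(4*m) :=
      ⟨CH/2 + 1/(4*m), add_pos_of_nonneg_of_pos (by linarith) (by positivity), rfl⟩
    obtain ⟨ε, hε0, hε1, hε2, hε3⟩ :
        ∃ ε : ℝ, 0 < ε ∧ ε ≤ t₀/2 ∧ ε ≤ (t₁ - t₀)/2 ∧ Cb2 * ε ≤ r := by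
      refine ⟨min (min (t₀/2) ((t₁ - t₀)/2)) (r/(Cb2+1)),
        lt_min (lt_min (by linarith) (by linarith)) (by positivity),
        le_trans (min_le_left _ _) (min_le_left _ _),
        le_trans (min_le_left _ _) (min_le_right _ _), ?_⟩
      have h1 : Cb2 * min (min (t₀/2) ((t₁ - t₀)/2)) (r/(Cb2+1)) ≤ Cb2 * (r/(Cb2+1)) :=
        mul_le_mul_of_nonneg_left (min_le_right _ _) hCb2.le
      have h2 : Cb2 * (r/(Cb2+1)) ≤ r := by
        rw [mul_div_assoc']
        rw [div_le_iff₀ (by linarith)]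
        nlinarith
      exact le_trans h1 h2
    have hIccJ : Icc (t₀-ε) (t₀+ε) ⊆ Icc (t₀/2) t₁ := fun x hx =>
      ⟨by linarith [hx.1], by linarith [hx.2]⟩
    set K : NNReal := ⟨CH + 1/m, by positivity⟩ with hKdef
    have hpl : IsPicardLindelof
        (fun t x => H t / 2 * (1 - x^2) - x/(4*m) * (1 - x^2)^2)
        (tmin := t₀-ε) (tmax := t₀+ε) ⟨t₀, ⟨by linarith, by linarith⟩⟩ L ⟨r, hr0.le⟩ 0
        ⟨Cb2, hCb2.le⟩ K := by
      refine ⟨?_, ?_, ?_, ?_⟩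
      · -- Lipschitz
        intro t ht
        apply Convex.lipschitzOnWith_of_nnnorm_hasDerivWithin_le (convex_closedBall L r)
          (f' := fun x => -(H t * x) - (1-x^2)*(1-5*x^2)/(4*m))
          (fun x _ => (mcv_hasDerivAt_field (H t) m x).hasDerivWithinAt)
        intro x hx
        have hx' := hball x hx
        have hHt := hCH t (hIccJ ht)
        have hbd := mcv_deriv_bound hm hHt hx'.1.le hx'.2.le
        rw [← NNReal.coe_le_coe]
        rw [coe_nnnorm, Real.norm_eq_abs]
        exact hbd
      · -- continuity in t
        intro x _
        exact (((hHcont.mono (fun s hs => lt_of_lt_of_le (by linarith : (0:ℝ) < t₀/2)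
          (hIccJ hs).1)).div_const 2).mul continuousOn_const).sub continuousOn_const
      · -- norm bound
        intro t ht x hx
        have hx' := hball x hx
        rw [Real.norm_eq_abs]
        change _ ≤ Cb2
        rw [hCb2eq]
        exact mcv_G_bound hm (hCH t (hIccJ ht)) hx'.1.le hx'.2.le
      · -- C * ε ≤ r
        show Cb2 * max ((t₀+ε) - t₀) (t₀ - (t₀-ε)) ≤ r - ((0:NNReal):ℝ)
        rw [NNReal.coe_zero, sub_zero, add_sub_cancel_left, sub_sub_cancel, max_self]
        exact hε3
    obtain ⟨w₀, hA, hB, hC⟩ := mcv_pl_solution hpl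
    have hw₀t₀ : w₀ t₀ = L := hA
    have hw₀mem : ∀ t ∈ Icc (t₀-ε) (t₀+ε), w₀ t ∈ Metric.closedBall L r := hB
    have hw₀deriv : ∀ t ∈ Icc (t₀-ε) (t₀+ε), HasDerivWithinAt w₀
        (H t / 2 * (1 - (w₀ t)^2) - w₀ t/(4*m) * (1 - (w₀ t)^2)^2) (Icc (t₀-ε) (t₀+ε)) t := hC
    clear hA hB hC
    -- the extension of z to t₀ by L has right derivative at t₀
    set zt : ℝ → ℝ := Function.update z t₀ L with hztdef
    have hztne : ∀ y : ℝ, y ≠ t₀ → zt y = z y := fun y hy => Function.update_of_ne hy _ _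
    have hupd : ∀ x : ℝ, x ≠ t₀ → zt =ᶠ[nhds x] z := by
      intro x hx
      filter_upwards [isOpen_compl_singleton.mem_nhds
        (by simpa using hx : x ∈ ({t₀}ᶜ : Set ℝ))] with y hy
      exact Function.update_of_ne hy _ _
    have hdiff : DifferentiableOn ℝ zt (Ioo t₀ t₁) := by
      intro x hx
      have h1 : DifferentiableAt ℝ z x := (hode x ⟨hx.1, hx.2.le⟩).differentiableAt
      exact (((hupd x (ne_of_gt hx.1)).differentiableAt_iff).mpr h1).differentiableWithinAt
    have hcw : ContinuousWithinAt zt (Ioo t₀ t₁) t₀ := by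
      have h1 : Tendsto z (nhdsWithin t₀ (Ioo t₀ t₁)) (nhds L) :=
        hlim.mono_left (nhdsWithin_mono _ Ioo_subset_Ioi_self)
      have h2 : z =ᶠ[nhdsWithin t₀ (Ioo t₀ t₁)] zt := by
        filter_upwards [self_mem_nhdsWithin] with y hy
        exact (hztne y (ne_of_gt hy.1)).symm
      have h3 : Tendsto zt (nhdsWithin t₀ (Ioo t₀ t₁)) (nhds L) := h1.congr' h2
      unfold ContinuousWithinAt
      rw [show zt t₀ = L from Function.update_self _ _ _]
      exact h3
    have hderivlim : Tendsto (fun x => deriv zt x) (nhdsWithin t₀ (Ioi t₀))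
        (nhds (H t₀ / 2 * (1 - L^2) - L/(4*m) * (1 - L^2)^2)) := by
      have hH : Tendsto H (nhdsWithin t₀ (Ioi t₀)) (nhds (H t₀)) :=
        ((hHcont.continuousAt (Ioi_mem_nhds ht₀pos)).tendsto).mono_left nhdsWithin_le_nhds
      have h1 : Tendsto (fun x => H x / 2 * (1 - (z x)^2) - z x/(4*m) * (1 - (z x)^2)^2)
          (nhdsWithin t₀ (Ioi t₀))
          (nhds (H t₀ / 2 * (1 - L^2) - L/(4*m) * (1 - L^2)^2)) :=
        ((hH.div_const 2).mul (tendsto_const_nhds.sub (hlim.pow 2))).sub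
          ((hlim.div_const (4*m)).mul ((tendsto_const_nhds.sub (hlim.pow 2)).pow 2))
      refine h1.congr' ?_
      filter_upwards [Ioo_mem_nhdsGT_of_mem ⟨le_rfl, ht₀1⟩] with x hx
      rw [(hupd x (ne_of_gt hx.1)).deriv_eq]
      exact ((hode x ⟨hx.1, hx.2.le⟩).deriv).symm
    have hzt₀ : HasDerivWithinAt zt (H t₀ / 2 * (1 - L^2) - L/(4*m) * (1 - L^2)^2)
        (Ici t₀) t₀ :=
      hasDerivWithinAt_Ici_of_tendsto_deriv hdiff hcw
        (Ioo_mem_nhdsGT_of_mem ⟨le_rfl, ht₀1⟩) hderivlim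
    -- glue
    set w : ℝ → ℝ := fun t => if t ≤ t₀ then w₀ t else z t with hwdef
    have hwt₀ : w t₀ = L := by rw [hwdef]; simp [hw₀t₀]
    refine ⟨t₀ - ε, w, by linarith, by linarith, ?_, ?_, ?_⟩
    · intro t ht
      rcases lt_trichotomy t t₀ with hlt | heq | hgt
      · have htIcc : t ∈ Icc (t₀-ε) (t₀+ε) := ⟨ht.1.le, by linarith⟩
        have h1 : HasDerivAt w₀ (H t / 2 * (1 - (w₀ t)^2) - w₀ t/(4*m) * (1 - (w₀ t)^2)^2) t :=
          (hw₀deriv t htIcc).hasDerivAt (Icc_mem_nhds (by linarith [ht.1]) (by linarith))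
        have h2 : w =ᶠ[nhds t] w₀ := by
          filter_upwards [isOpen_Iio.mem_nhds hlt] with y hy
          rw [hwdef]
          exact if_pos (le_of_lt hy)
        rw [show w t = w₀ t by rw [hwdef]; exact if_pos hlt.le]
        exact h1.congr_of_eventuallyEq h2
      · subst heq
        rw [hwt₀]
        have hL1' : HasDerivWithinAt w₀
            (H t / 2 * (1 - (w₀ t)^2) - w₀ t/(4*m) * (1 - (w₀ t)^2)^2)
            (Icc (t-ε) (t+ε)) t := hw₀deriv t ⟨by linarith, by linarith⟩
        rw [hw₀t₀] at hL1'
        have hL2 : HasDerivWithinAt w₀ (H t / 2 * (1 - L^2) - L/(4*m) * (1 - L^2)^2)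
            (Iic t) t :=
          hL1'.mono_of_mem_nhdsWithin (mem_of_superset
            (Icc_mem_nhdsLE_of_mem ⟨by linarith, le_rfl⟩)
            (Icc_subset_Icc_right (by linarith)))
        have hL3 : HasDerivWithinAt w (H t / 2 * (1 - L^2) - L/(4*m) * (1 - L^2)^2)
            (Iic t) t := hL2.congr (fun y hy => by rw [hwdef]; exact if_pos hy)
            (by rw [hwdef]; exact if_pos le_rfl)
        have hR2 : HasDerivWithinAt w (H t / 2 * (1 - L^2) - L/(4*m) * (1 - L^2)^2)
            (Ici t) t := by
          refine hzt₀.congr (fun y hy => ?_) ?_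
          · rcases eq_or_lt_of_le (Set.mem_Ici.mp hy) with hyeq | hylt
            · rw [← hyeq, hwt₀, show zt t = L from Function.update_self _ _ _]
            · rw [hztne y (ne_of_gt hylt), hwdef]
              exact if_neg (not_le.mpr hylt)
          · rw [hwt₀, show zt t = L from Function.update_self _ _ _]
        have hU := hL3.union hR2
        rw [Iic_union_Ici] at hU
        exact hasDerivWithinAt_univ.mp hU
      · have h1 := hode t ⟨hgt, ht.2⟩
        have h2 : w =ᶠ[nhds t] z := by
          filter_upwards [isOpen_Ioi.mem_nhds hgt] with y hy
          rw [hwdef]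
          exact if_neg (not_le.mpr hy)
        rw [show w t = z t by rw [hwdef]; exact if_neg (not_le.mpr hgt)]
        exact h1.congr_of_eventuallyEq h2
    · intro t ht
      by_cases hc : t ≤ t₀
      · have htIcc : t ∈ Icc (t₀-ε) (t₀+ε) := ⟨ht.1.le, by linarith⟩
        have h2 := hball _ (hw₀mem t htIcc)
        rw [show w t = w₀ t by rw [hwdef]; exact if_pos hc]
        exact ⟨h2.1, h2.2⟩
      · push_neg at hc
        rw [show w t = z t by rw [hwdef]; exact if_neg (not_le.mpr hc)]
        exact hrange t ⟨hc, ht.2⟩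
    · intro t ht
      rw [hwdef]
      exact if_neg (not_le.mpr ht.1)
  -- Part D : L = 1 is impossible
  · exfalso
    have hlim1 : Tendsto z (nhdsWithin t₀ (Ioi t₀)) (nhds 1) := hLeq ▸ hlim
    have hH0 := hHpos t₀ ht₀pos
    have hHt₀ : ContinuousAt H t₀ := hHcont.continuousAt (Ioi_mem_nhds ht₀pos)
    have hev : ∀ᶠ t in nhdsWithin t₀ (Ioi t₀),
        (0 < H t / 2 * (1 - (z t)^2) - z t / (4*m) * (1 - (z t)^2)^2 ∧ t ∈ Ioc t₀ t₁) := by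
      have e1 : ∀ᶠ t in nhdsWithin t₀ (Ioi t₀), H t₀/2 < H t :=
        (hHt₀.tendsto.mono_left nhdsWithin_le_nhds).eventually
          (eventually_gt_nhds (by linarith))
      have e2 : ∀ᶠ t in nhdsWithin t₀ (Ioi t₀), 1 - m*(H t₀)/2 < z t :=
        hlim1.eventually (eventually_gt_nhds (by nlinarith [mul_pos hm hH0]))
      have e3 : ∀ᶠ t in nhdsWithin t₀ (Ioi t₀), t ∈ Ioc t₀ t₁ :=
        Ioc_mem_nhdsGT_of_mem ⟨le_rfl, ht₀1⟩
      filter_upwards [e1, e2, e3] with t h1 h2 h3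
      refine ⟨?_, h3⟩
      have h4 := hrange t h3
      exact mcv_ineq_D hm hH0 h1 h4.1 h4.2 h2
    obtain ⟨b, hb, hbsub⟩ := mem_nhdsGT_iff_exists_Ioc_subset.mp hev
    have hmono : ∀ s ∈ Ioc t₀ b, ∀ t ∈ Ioc t₀ b, s < t → z s < z t := by
      intro s hs t ht hst
      have hIccsub : Icc s t ⊆ Ioc t₀ b := fun x hx =>
        ⟨lt_of_lt_of_le hs.1 hx.1, le_trans hx.2 ht.2⟩
      have hcont : ContinuousOn z (Icc s t) := hzc.mono (fun x hx => (hbsub (hIccsub hx)).2)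
      have hsm := strictMonoOn_of_deriv_pos (convex_Icc s t) hcont (fun x hx => by
        rw [interior_Icc] at hx
        have hx' := hbsub (hIccsub (Ioo_subset_Icc_self hx))
        rw [(hode x hx'.2).deriv]
        exact hx'.1)
      exact hsm (left_mem_Icc.mpr hst.le) (right_mem_Icc.mpr hst.le) hst
    have hble : z b < 1 := (hrange b (hbsub ⟨hb, le_rfl⟩).2).2
    have hev2 : ∀ᶠ s in nhdsWithin t₀ (Ioi t₀), z s ≤ z b := by
      filter_upwards [Ioo_mem_nhdsGT_of_mem ⟨le_rfl, hb⟩] with s hs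
      exact (hmono s ⟨hs.1, hs.2.le⟩ b ⟨hb, le_rfl⟩ hs.2).le
    have hcontra := le_of_tendsto hlim1 hev2
    linarith
end

section
/- Let H satisfy the Class 1 conditions with limit H₀ > 0 and sound-speed constant κ = (3/2)(1 + g'(0)) > 0. Then there exists a continuously differentiable function w : [H₀, ∞) → ℝ such that H'(t) = w(H(t)) for all t > 0, w(ξ) < 0 for all ξ > H₀, w(H₀) = 0, and w'(H₀) = −2H₀κ. Moreover w extends to a C¹ function on all of ℝ (for instance by setting w(H₀ − ξ) = −w(H₀ + ξ) for ξ > 0). -/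
open Real Filter Set

noncomputable section

/-- The Schwarzschild factor `f(r) = 1 - 2m/r`. -/
def mcf (m r : ℝ) : ℝ := 1 - 2*m/r

/-- Definition 1: expanding McVittie spacetime with a big bang background.
`H` is C² on `(0,∞)`, positive, strictly decreasing (`H' < 0`), and satisfies the
big bang condition `∫_t^{t₀} H → +∞` as `t → 0⁺`. -/
def Def1 (H : ℝ → ℝ) : Prop :=
  ContDiffOn ℝ 2 H (Set.Ioi 0) ∧
  (∀ t > 0, 0 < H t) ∧
  (∀ t > 0, deriv H t < 0) ∧
  (∀ t₀ > 0, Tendsto (fun t => ∫ u in t..t₀, H u) (nhdsWithin 0 (Set.Ioi 0)) atTop)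

/-- The causal geodesic system of the McVittie metric with mass `m`, angular momentum `ℓ`,
causality parameter `ε` (0 for null, -1 for timelike) and Hubble function `H`,
for functions `t, r` with derivatives `t', r'` on a set `D` of parameter values:
the two second order equations, the first integral, and the constraints
`t > 0`, `r > 2m`, `t' > 0`. -/
def IsGeodesic (m ℓ ε : ℝ) (H t r t' r' : ℝ → ℝ) (D : Set ℝ) : Prop :=
  ∀ s ∈ D,
    0 < t s ∧ 2*m < r s ∧ 0 < t' s ∧
    HasDerivAt t (t' s) s ∧ HasDerivAt r (r' s) s ∧
    HasDerivAt r' (r s * Real.sqrt (mcf m (r s)) * deriv H (t s) * (t' s)^2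
        + (1 - 3*m / r s) * ℓ^2 / (r s)^3
        + ε * (m / (r s)^2 - r s * (H (t s))^2)) s ∧
    HasDerivAt t' (-(1 - 3*m / r s) * (Real.sqrt (mcf m (r s)))⁻¹ * H (t s) * (t' s)^2
        - (2*m / (r s)^2) * (mcf m (r s))⁻¹ * t' s * r' s
        - ε * (Real.sqrt (mcf m (r s)))⁻¹ * H (t s)) s ∧
    (-(mcf m (r s) - (r s)^2 * (H (t s))^2) * (t' s)^2
        - 2 * r s * (Real.sqrt (mcf m (r s)))⁻¹ * H (t s) * t' s * r' s
        + (mcf m (r s))⁻¹ * (r' s)^2 + ℓ^2 / (r s)^2 = ε)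

/-- Domain `[0, sω)` of a future-directed geodesic, with `sω` a possibly infinite endpoint. -/
def GeoDomF (sω : EReal) : Set ℝ := {s : ℝ | 0 ≤ s ∧ (s : EReal) < sω}

/-- A geodesic on its right-maximal interval of existence `[0, sω)`:
a solution which admits no extension to any strictly larger interval `[0, sω₂)`. -/
def MaxFutureGeodesic (m ℓ ε : ℝ) (H t r t' r' : ℝ → ℝ) (sω : EReal) : Prop :=
  0 < sω ∧ IsGeodesic m ℓ ε H t r t' r' (GeoDomF sω) ∧
  ¬ ∃ (sω₂ : EReal) (t₂ r₂ t₂' r₂' : ℝ → ℝ), sω < sω₂ ∧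
      IsGeodesic m ℓ ε H t₂ r₂ t₂' r₂' (GeoDomF sω₂) ∧
      ∀ s ∈ GeoDomF sω, t₂ s = t s ∧ r₂ s = r s ∧ t₂' s = t' s ∧ r₂' s = r' s

/-- Class 1 conditions: Definition 1 together with `H → H₀ > 0`, `H' → 0`, `H'' → 0`
at late times, a C¹ equation of state `p₀ = g(ρ₀)` (with cosmological constant `Λ = 3H₀²`)
with sound-speed constant `κ = (3/2)(1 + g'(0)) > 0`, and the horizon existence condition
`m·H₀ < 1/(3√3)`. -/
def Class1 (m H₀ κ : ℝ) (H g : ℝ → ℝ) : Prop :=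
  Def1 H ∧ 0 < H₀ ∧
  Tendsto H atTop (nhds H₀) ∧
  Tendsto (deriv H) atTop (nhds 0) ∧
  Tendsto (deriv (deriv H)) atTop (nhds 0) ∧
  ContDiffOn ℝ 1 g (Set.Ici 0) ∧
  (∀ t > 0, (-2 * deriv H t - 3 * (H t)^2 + 3*H₀^2) / (8*π)
      = g ((3*(H t)^2 - 3*H₀^2) / (8*π))) ∧
  κ = 3/2 * (1 + derivWithin g (Set.Ici 0) 0) ∧ 0 < κ ∧
  m * H₀ < 1 / (3*Real.sqrt 3)

/-- Class 2 conditions: Definition 1 together with `H → 0`, `H' → 0`, `H'' → 0`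
at late times and a C² equation of state `p₀ = g(ρ₀)` (with `Λ = 0`)
with sound-speed constant `κ = (3/2)(1 + g'(0)) > 0`. -/
def Class2 (κ : ℝ) (H g : ℝ → ℝ) : Prop :=
  Def1 H ∧
  Tendsto H atTop (nhds 0) ∧
  Tendsto (deriv H) atTop (nhds 0) ∧
  Tendsto (deriv (deriv H)) atTop (nhds 0) ∧
  ContDiffOn ℝ 2 g (Set.Ici 0) ∧
  (∀ t > 0, (-2 * deriv H t - 3 * (H t)^2) / (8*π) = g ((3*(H t)^2) / (8*π))) ∧
  κ = 3/2 * (1 + derivWithin g (Set.Ici 0) 0) ∧ 0 < κ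

/-- `R` solves the ingoing radial null geodesic equation
`dr/dt = r·H(t)·√(1 − 2m/r) − (1 − 2m/r)` on `D`, staying in `r > 2m`. -/
def SolvesIRNG (m : ℝ) (H R : ℝ → ℝ) (D : Set ℝ) : Prop :=
  ∀ u ∈ D, 2*m < R u ∧
    HasDerivAt R (R u * H u * Real.sqrt (1 - 2*m / R u) - (1 - 2*m / R u)) u

/-- `R` solves the outgoing radial null geodesic equation
`dr/dt = r·H(t)·√(1 − 2m/r) + (1 − 2m/r)` on `D`, staying in `r > 2m`. -/
def SolvesORNG (m : ℝ) (H R : ℝ → ℝ) (D : Set ℝ) : Prop :=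
  ∀ u ∈ D, 2*m < R u ∧
    HasDerivAt R (R u * H u * Real.sqrt (1 - 2*m / R u) + (1 - 2*m / R u)) u

/-- The ingoing condition `f(r)·r' = (r·f(r)^{−1/2}·H(t) − 1)·f(r)·t'` along a null geodesic. -/
def IngoingOn (m : ℝ) (H t r t' r' : ℝ → ℝ) (D : Set ℝ) : Prop :=
  ∀ s ∈ D, mcf m (r s) * r' s
    = (r s * (Real.sqrt (mcf m (r s)))⁻¹ * H (t s) - 1) * mcf m (r s) * t' s

/-- The outgoing condition `f(r)⁻¹·r' = (r·f(r)^{−1/2}·H(t) + 1)·t'` along a null geodesic. -/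
def OutgoingOn (m : ℝ) (H t r t' r' : ℝ → ℝ) (D : Set ℝ) : Prop :=
  ∀ s ∈ D, (mcf m (r s))⁻¹ * r' s
    = (r s * (Real.sqrt (mcf m (r s)))⁻¹ * H (t s) + 1) * t' s

/-- The point `(t, r)` lies in the anti-trapped region: `r > 2m` and `H(t) > (1/r)√(1 − 2m/r)`. -/
def AntiTrapped (m : ℝ) (H : ℝ → ℝ) (u rr : ℝ) : Prop :=
  2*m < rr ∧ 1 / rr * Real.sqrt (1 - 2*m/rr) < H u

lemma exists_c1_extension (g : ℝ → ℝ) (hg : ContDiffOn ℝ 1 g (Set.Ici 0)) :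
    ∃ G : ℝ → ℝ, ContDiff ℝ 1 G ∧ Set.EqOn G g (Set.Ici 0) ∧
      HasDerivAt G (derivWithin g (Set.Ici 0) 0) 0 := by
  set c := derivWithin g (Set.Ici 0) 0 with hc
  set G : ℝ → ℝ := fun x => if 0 ≤ x then g x else g 0 + c * x with hGdef
  set D : ℝ → ℝ := fun x => if 0 ≤ x then derivWithin g (Set.Ici 0) x else c with hDdef
  have hEq : Set.EqOn G g (Set.Ici 0) := fun x hx => by simp [hGdef, mem_Ici.mp hx]
  have hdg : ∀ x ∈ Set.Ici (0:ℝ), HasDerivWithinAt g (derivWithin g (Set.Ici 0) x) (Set.Ici 0) x :=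
    fun x hx => ((hg.differentiableOn one_ne_zero) x hx).hasDerivWithinAt
  have key : ∀ x, HasDerivAt G (D x) x := by
    intro x
    rcases lt_trichotomy x 0 with hx | hx | hx
    · have hlin : HasDerivAt (fun y : ℝ => g 0 + c * y) c x := by
        simpa using ((hasDerivAt_id x).const_mul c).const_add (g 0)
      have : G =ᶠ[nhds x] (fun y : ℝ => g 0 + c * y) := by
        filter_upwards [Iio_mem_nhds hx] with y hy
        simp [hGdef, not_le.mpr (mem_Iio.mp hy)]
      simpa [hDdef, not_le.mpr hx] using hlin.congr_of_eventuallyEq this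
    · subst hx
      have hright : HasDerivWithinAt G c (Set.Ici 0) 0 := by
        refine ((hdg 0 self_mem_Ici).congr (fun y hy => hEq hy) (hEq self_mem_Ici))
      have hleft : HasDerivWithinAt G c (Set.Iic 0) 0 := by
        have hlin : HasDerivAt (fun y : ℝ => g 0 + c * y) c 0 := by
          simpa using ((hasDerivAt_id (0:ℝ)).const_mul c).const_add (g 0)
        refine hlin.hasDerivWithinAt.congr (fun y hy => ?_) (by simp [hGdef])
        rcases eq_or_lt_of_le (mem_Iic.mp hy) with h | h
        · simp [hGdef, h]
        · simp [hGdef, not_le.mpr h]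
      have := hleft.union hright
      rw [Iic_union_Ici] at this
      simpa [hDdef] using hasDerivWithinAt_univ.mp this
    · have hmem : Set.Ici (0:ℝ) ∈ nhds x := Ici_mem_nhds hx
      have hgx : HasDerivAt g (derivWithin g (Set.Ici 0) x) x :=
        (hdg x (le_of_lt hx)).hasDerivAt hmem
      have : G =ᶠ[nhds x] g := by
        filter_upwards [hmem] with y hy using hEq hy
      simpa [hDdef, hx.le] using hgx.congr_of_eventuallyEq this
  have hDcont : Continuous D := by
    have hdc : ContinuousOn (derivWithin g (Set.Ici 0)) (Set.Ici 0) :=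
      (hg.continuousOn_derivWithin (uniqueDiffOn_Ici 0) le_rfl)
    rw [continuous_iff_continuousAt]
    intro x
    rcases lt_trichotomy x 0 with hx | hx | hx
    · have : D =ᶠ[nhds x] (fun _ => c) := by
        filter_upwards [Iio_mem_nhds hx] with y hy
        simp [hDdef, not_le.mpr (mem_Iio.mp hy)]
      exact (continuousAt_const).congr this.symm
    · subst hx
      rw [continuousAt_iff_continuous_left_right]
      constructor
      · have : Set.EqOn D (fun _ => c) (Set.Iic 0) := by
          intro y hy
          rcases eq_or_lt_of_le (mem_Iic.mp hy) with h | h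
          · simp [hDdef, h, hc]
          · simp [hDdef, not_le.mpr h]
        exact (continuousWithinAt_const).congr this (by simp [hDdef, hc])
      · have heq : Set.EqOn D (derivWithin g (Set.Ici 0)) (Set.Ici 0) := by
          intro y hy; simp [hDdef, mem_Ici.mp hy]
        exact (hdc.continuousWithinAt self_mem_Ici).congr heq (by simp [hDdef])
    · have hmem : Set.Ici (0:ℝ) ∈ nhds x := Ici_mem_nhds hx
      have : D =ᶠ[nhds x] (derivWithin g (Set.Ici 0)) := by
        filter_upwards [hmem] with y hy
        simp [hDdef, mem_Ici.mp hy]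
      exact (hdc.continuousAt hmem).congr this.symm
  have hdiff : Differentiable ℝ G := fun x => (key x).differentiableAt
  have hderiv : deriv G = D := funext fun x => (key x).deriv
  refine ⟨G, ?_, hEq, by simpa [hDdef] using key 0⟩
  rw [contDiff_one_iff_deriv]
  exact ⟨hdiff, hderiv ▸ hDcont⟩

/-- (Lemma 5, Class 1 part.) Under the Class 1 conditions (without the
horizon existence condition, which is not needed here), there is a C¹ function `w` with
`H'(t) = w(H(t))` for all `t > 0`, `w < 0` on `(H₀, ∞)`, `w(H₀) = 0` and
`w'(H₀) = −2H₀κ`; the function is C¹ on all of `ℝ` (extending from `[H₀, ∞)`). -/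
theorem class1_w_function
    (H₀ κ : ℝ) (H g : ℝ → ℝ)
    (hH : Def1 H) (hH₀ : 0 < H₀)
    (hlim : Tendsto H atTop (nhds H₀))
    (hlim' : Tendsto (deriv H) atTop (nhds 0))
    (hlim'' : Tendsto (deriv (deriv H)) atTop (nhds 0))
    (hg : ContDiffOn ℝ 1 g (Set.Ici 0))
    (heos : ∀ t > (0:ℝ), (-2 * deriv H t - 3 * (H t)^2 + 3*H₀^2) / (8*π)
        = g ((3*(H t)^2 - 3*H₀^2) / (8*π)))
    (hκ : κ = 3/2 * (1 + derivWithin g (Set.Ici 0) 0)) (hκpos : 0 < κ) :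
    ∃ w : ℝ → ℝ, ContDiff ℝ 1 w ∧
      (∀ t > (0:ℝ), deriv H t = w (H t)) ∧
      (∀ ξ > H₀, w ξ < 0) ∧
      w H₀ = 0 ∧ deriv w H₀ = -2*H₀*κ := by
  obtain ⟨hsm, hpos, hder, hBB⟩ := hH
  set c := derivWithin g (Set.Ici 0) 0 with hc
  obtain ⟨G, hG1, hGg, hG0⟩ := exists_c1_extension g hg
  have hπ : (0:ℝ) < π := Real.pi_pos
  have hcont : ContinuousOn H (Set.Ioi 0) := hsm.continuousOn
  have hanti : StrictAntiOn H (Set.Ioi 0) := by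
    refine strictAntiOn_of_deriv_neg (convex_Ioi 0) hcont ?_
    intro x hx
    exact hder x (by simpa [interior_Ioi] using hx)
  have hge : ∀ t > (0:ℝ), H₀ ≤ H t := by
    intro t ht
    refine le_of_tendsto hlim ?_
    filter_upwards [eventually_ge_atTop t] with s hs
    exact hanti.antitoneOn (mem_Ioi.mpr ht) (mem_Ioi.mpr (lt_of_lt_of_le ht hs)) hs
  have hargnn : ∀ t > (0:ℝ), (0:ℝ) ≤ (3*(H t)^2 - 3*H₀^2) / (8*π) := by
    intro t ht
    have h2 : H₀^2 ≤ (H t)^2 := pow_le_pow_left₀ hH₀.le (hge t ht) 2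
    have h3 : (0:ℝ) ≤ 3*(H t)^2 - 3*H₀^2 := by nlinarith
    exact div_nonneg h3 (by positivity)
  -- g 0 = 0
  have hg00 : g 0 = 0 := by
    have hF : Continuous (fun y : ℝ => (3*y^2 - 3*H₀^2)/(8*π)) := by continuity
    have hρ : Tendsto (fun t => (3*(H t)^2 - 3*H₀^2)/(8*π)) atTop (nhds 0) := by
      have := (hF.tendsto H₀).comp hlim
      simpa [Function.comp_def, show (3*H₀^2 - 3*H₀^2)/(8*π) = 0 by ring] using this
    have hρ' : Tendsto (fun t => (3*(H t)^2 - 3*H₀^2)/(8*π)) atTop (nhdsWithin 0 (Set.Ici 0)) := by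
      rw [tendsto_nhdsWithin_iff]
      refine ⟨hρ, ?_⟩
      filter_upwards [eventually_gt_atTop 0] with t ht
      exact hargnn t ht
    have hcomp : Tendsto (fun t => g ((3*(H t)^2 - 3*H₀^2)/(8*π))) atTop (nhds (g 0)) :=
      ((hg.continuousOn 0 self_mem_Ici).tendsto).comp hρ'
    have hp : Tendsto (fun t => (-2 * deriv H t - 3*(H t)^2 + 3*H₀^2)/(8*π)) atTop (nhds 0) := by
      have h1 : Tendsto (fun t => -2 * deriv H t) atTop (nhds 0) := by
        simpa using hlim'.const_mul (-2)
      have hF2 : Continuous (fun y : ℝ => -3*y^2 + 3*H₀^2) := by continuity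
      have h2 : Tendsto (fun t => -3*(H t)^2 + 3*H₀^2) atTop (nhds 0) := by
        have := (hF2.tendsto H₀).comp hlim
        simpa [Function.comp_def, show -3*H₀^2 + 3*H₀^2 = 0 by ring] using this
      have := (h1.add h2).div_const (8*π)
      simp only [add_zero, zero_div] at this
      refine this.congr (fun t => by ring)
    have hp2 : Tendsto (fun t => g ((3*(H t)^2 - 3*H₀^2)/(8*π))) atTop (nhds 0) := by
      refine hp.congr' ?_
      filter_upwards [eventually_gt_atTop 0] with t ht
      exact heos t ht
    exact tendsto_nhds_unique hcomp hp2
  set w : ℝ → ℝ := fun ξ => (3*H₀^2 - 3*ξ^2)/2 - 4*π * G ((3*ξ^2 - 3*H₀^2)/(8*π)) with hwdef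
  have hw1 : ContDiff ℝ 1 w := by
    have hq : ContDiff ℝ 1 (fun ξ : ℝ => (3*ξ^2 - 3*H₀^2)/(8*π)) := by
      apply ContDiff.div_const
      fun_prop
    have h1 : ContDiff ℝ 1 (fun ξ : ℝ => (3*H₀^2 - 3*ξ^2)/2) := by
      apply ContDiff.div_const
      fun_prop
    exact h1.sub (contDiff_const.mul (hG1.comp hq))
  have hwH : ∀ t > (0:ℝ), deriv H t = w (H t) := by
    intro t ht
    have hGa : G ((3*(H t)^2 - 3*H₀^2)/(8*π)) = g ((3*(H t)^2 - 3*H₀^2)/(8*π)) :=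
      hGg (hargnn t ht)
    simp only [hwdef]
    rw [hGa, ← heos t ht]
    field_simp
    ring
  have hsurj : ∀ ξ > H₀, ∃ t > (0:ℝ), H t = ξ := by
    intro ξ hξ
    obtain ⟨b, hb1, hbξ⟩ : ∃ b, 1 < b ∧ H b < ξ := by
      obtain ⟨b, h1, h2⟩ := ((hlim.eventually (Iio_mem_nhds hξ)).and (eventually_gt_atTop 1)).exists
      exact ⟨b, h2, h1⟩
    obtain ⟨a, haIoo, haξ⟩ : ∃ a, a ∈ Set.Ioo (0:ℝ) 1 ∧ ξ < H a := by
      have h1 : ∀ᶠ t in nhdsWithin 0 (Set.Ioi 0), ξ < ∫ u in t..1, H u :=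
        (hBB 1 one_pos).eventually_gt_atTop ξ
      have h2 : Set.Ioo (0:ℝ) 1 ∈ nhdsWithin 0 (Set.Ioi 0) :=
        Ioo_mem_nhdsGT_of_mem (by constructor <;> norm_num)
      obtain ⟨a, hint, haIoo⟩ := (h1.and (eventually_of_mem h2 (fun x hx => hx))).exists
      refine ⟨a, haIoo, ?_⟩
      have ha0 : 0 < a := haIoo.1
      have ha1 : a < 1 := haIoo.2
      have hsub : Set.uIcc a 1 ⊆ Set.Ioi 0 := by
        rw [Set.uIcc_of_le ha1.le]
        intro y hy
        exact lt_of_lt_of_le ha0 hy.1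
      have hint1 : IntervalIntegrable H MeasureTheory.volume a 1 :=
        (hcont.mono hsub).intervalIntegrable
      have hmono : ∫ u in a..1, H u ≤ ∫ u in a..1, H a := by
        apply intervalIntegral.integral_mono_on ha1.le hint1 intervalIntegrable_const
        intro u hu
        exact hanti.antitoneOn (mem_Ioi.mpr ha0) (mem_Ioi.mpr (lt_of_lt_of_le ha0 hu.1)) hu.1
      have hconst : (∫ _ in a..1, H a) = (1 - a) * H a := by
        simp [mul_comm]
      have hHa : 0 < H a := hpos a ha0
      nlinarith [hint, hmono, hconst]
    have ha0 : 0 < a := haIoo.1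
    have hab : a < b := lt_trans haIoo.2 hb1
    have hcic : ContinuousOn H (Set.Icc a b) :=
      hcont.mono (fun y hy => lt_of_lt_of_le ha0 hy.1)
    obtain ⟨t, htI, htξ⟩ := intermediate_value_Icc' hab.le hcic ⟨hbξ.le, haξ.le⟩
    exact ⟨t, lt_of_lt_of_le ha0 htI.1, htξ⟩
  have hneg : ∀ ξ > H₀, w ξ < 0 := by
    intro ξ hξ
    obtain ⟨t, ht, htξ⟩ := hsurj ξ hξ
    rw [← htξ, ← hwH t ht]
    exact hder t ht
  have hw0 : w H₀ = 0 := by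
    simp only [hwdef]
    rw [show (3*H₀^2 - 3*H₀^2)/(8*π) = 0 by ring, hGg self_mem_Ici, hg00]
    ring
  have hq' : HasDerivAt (fun ξ : ℝ => (3*ξ^2 - 3*H₀^2)/(8*π)) (6*H₀/(8*π)) H₀ := by
    have h := (((hasDerivAt_pow 2 H₀).const_mul 3).sub_const (3*H₀^2)).div_const (8*π)
    exact h.congr_deriv (by norm_num; ring)
  have hG0' : HasDerivAt G c ((3*H₀^2 - 3*H₀^2)/(8*π)) := by
    rw [show (3*H₀^2 - 3*H₀^2)/(8*π) = 0 by ring]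
    exact hG0
  have hcomp : HasDerivAt (fun ξ : ℝ => G ((3*ξ^2 - 3*H₀^2)/(8*π))) (c * (6*H₀/(8*π))) H₀ := by
    have := HasDerivAt.comp H₀ (by simpa using hG0') hq'
    simpa [Function.comp_def] using this
  have hfirst : HasDerivAt (fun ξ : ℝ => (3*H₀^2 - 3*ξ^2)/2) (-3*H₀) H₀ := by
    have h := (((hasDerivAt_pow 2 H₀).const_mul 3).const_sub (3*H₀^2)).div_const 2
    exact h.congr_deriv (by norm_num; ring)
  have hw' : HasDerivAt w (-3*H₀ - 4*π*(c*(6*H₀/(8*π)))) H₀ := by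
    exact hfirst.sub (hcomp.const_mul (4*π))
  refine ⟨w, hw1, hwH, hneg, hw0, ?_⟩
  rw [hw'.deriv, hκ]
  field_simp
  ring
end
end

section
/- Let H satisfy the Class 2 conditions with sound-speed constant κ = (3/2)(1 + g'(0)). Then lim_{t→∞} (−H'(t)/H(t)²) = κ. -/
open Real Filter Set

noncomputable section

/-- (Lemma 6.) In a Class 2 McVittie spacetime with sound-speed constant
`κ = (3/2)(1 + g'(0))`, the Hubble function satisfies `−H'(t)/H(t)² → κ` as `t → ∞`. -/
theorem class2_hubble_ratio_limit
    (κ : ℝ) (H g : ℝ → ℝ) (hclass : Class2 κ H g) :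
    Tendsto (fun t => -deriv H t / (H t)^2) atTop (nhds κ) := by
  obtain ⟨hdef, hH0, hH'0, _hH''0, hg, heos, hκ, _hκpos⟩ := hclass
  obtain ⟨_hC2, hpos, _hneg, -⟩ := hdef
  have hπ : (0:ℝ) < π := Real.pi_pos
  set ρ : ℝ → ℝ := fun t => 3*(H t)^2/(8*π) with hρdef
  have hρ0 : Tendsto ρ atTop (nhds 0) := by
    have : Tendsto (fun t => 3*(H t)^2/(8*π)) atTop (nhds (3*(0:ℝ)^2/(8*π))) :=
      (tendsto_const_nhds.mul (hH0.pow 2)).div_const _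
    simpa using this
  have hρpos : ∀ᶠ t in atTop, ρ t ∈ Set.Ioi (0:ℝ) := by
    filter_upwards [eventually_gt_atTop (0:ℝ)] with t ht
    have h1 := hpos t ht
    simp only [hρdef, Set.mem_Ioi]
    positivity
  have hρtend : Tendsto ρ atTop (nhdsWithin 0 (Set.Ioi 0)) :=
    tendsto_nhdsWithin_iff.mpr ⟨hρ0, hρpos⟩
  have hρtend' : Tendsto ρ atTop (nhdsWithin 0 (Set.Ici 0)) :=
    hρtend.mono_right (nhdsWithin_mono _ Set.Ioi_subset_Ici_self)
  -- g 0 = 0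
  have hgc : ContinuousWithinAt g (Set.Ici 0) 0 :=
    (hg.continuousOn) 0 Set.self_mem_Ici
  have htog0 : Tendsto (fun t => g (ρ t)) atTop (nhds (g 0)) :=
    hgc.tendsto.comp hρtend'
  have hphi : Tendsto (fun t => (-2 * deriv H t - 3 * (H t)^2) / (8*π)) atTop (nhds 0) := by
    have : Tendsto (fun t => (-2 * deriv H t - 3 * (H t)^2) / (8*π)) atTop
        (nhds ((-2 * 0 - 3 * (0:ℝ)^2) / (8*π))) :=
      ((tendsto_const_nhds.mul hH'0).sub (tendsto_const_nhds.mul (hH0.pow 2))).div_const _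
    simpa using this
  have hg0 : g 0 = 0 := by
    have heq : (fun t => g (ρ t)) =ᶠ[atTop] fun t => (-2 * deriv H t - 3 * (H t)^2) / (8*π) := by
      filter_upwards [eventually_gt_atTop (0:ℝ)] with t ht
      exact (heos t ht).symm
    exact tendsto_nhds_unique (htog0.congr' heq) hphi
  -- slope limit
  set d : ℝ := derivWithin g (Set.Ici 0) 0 with hd
  have hdiff : DifferentiableWithinAt ℝ g (Set.Ici 0) 0 :=
    (hg.differentiableOn (by norm_num)) 0 Set.self_mem_Ici
  have hder : HasDerivWithinAt g d (Set.Ici 0) 0 := hdiff.hasDerivWithinAt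
  have hslope : Tendsto (slope g 0) (nhdsWithin 0 (Set.Ici 0 \ {0})) (nhds d) :=
    hasDerivWithinAt_iff_tendsto_slope.mp hder
  have hsetdiff : Set.Ici (0:ℝ) \ {0} = Set.Ioi 0 := by
    ext x; simp [Set.mem_diff, lt_iff_le_and_ne, eq_comm, and_comm]
  rw [hsetdiff] at hslope
  have hslopeT : Tendsto (fun t => slope g 0 (ρ t)) atTop (nhds d) :=
    hslope.comp hρtend
  -- final
  have hfin : Tendsto (fun t => 3/2 + 3/2 * slope g 0 (ρ t)) atTop (nhds κ) := by
    have : Tendsto (fun t => 3/2 + 3/2 * slope g 0 (ρ t)) atTop (nhds (3/2 + 3/2 * d)) :=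
      tendsto_const_nhds.add (tendsto_const_nhds.mul hslopeT)
    have hκ' : κ = 3/2 + 3/2 * d := by rw [hκ]; ring
    rwa [← hκ'] at this
  refine hfin.congr' ?_
  filter_upwards [eventually_gt_atTop (0:ℝ)] with t ht
  have hHpos := hpos t ht
  have hρt : 0 < ρ t := by simp only [hρdef]; positivity
  have hEoS := heos t ht
  have hsl : slope g 0 (ρ t) = ((-2 * deriv H t - 3 * (H t)^2) / (8*π)) / ρ t := by
    rw [slope_def_field, hg0, hEoS]
    simp [div_eq_div_iff]
    rfl
  rw [hsl]
  have hH2 : (H t)^2 ≠ 0 := by positivity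
  simp only [hρdef]
  field_simp
  ring
end
end

section
/- Let m > 0 and H₀ > 0, and for ℓ ∈ ℝ define G(r) = H₀²·r − m/r² + (1 − 3m/r)·ℓ²/r³. There exist ℓ ∈ ℝ and r_c > 2m with G(r_c) = 0 and G'(r_c) < 0 if and only if m·H₀ < 2/(75√3). Moreover, whenever G(r_c) = 0 and G'(r_c) < 0, the radius satisfies 6m < r_c < r₊, where r₊ is the larger positive root of 1 − 2m/r − r²H₀² = 0. -/
open Real Filter Set

lemma sds_deriv_G (m H₀ ℓ r : ℝ) (hr : r ≠ 0) :
    deriv (fun ρ : ℝ => H₀^2*ρ - m/ρ^2 + (1 - 3*m/ρ)*ℓ^2/ρ^3) r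
    = H₀^2 + 2*m/r^3 + (12*m - 3*r)*ℓ^2/r^5 := by
  have h2 : r^2 ≠ 0 := pow_ne_zero _ hr
  have h3 : r^3 ≠ 0 := pow_ne_zero _ hr
  have d1 : HasDerivAt (fun ρ : ℝ => H₀^2*ρ) (H₀^2*1) r := (hasDerivAt_id r).const_mul _
  have d2 : HasDerivAt (fun ρ : ℝ => m/ρ^2) ((0*r^2 - m*(2*r^1))/(r^2)^2) r :=
    (hasDerivAt_const r m).div (hasDerivAt_pow 2 r) h2
  have dn : HasDerivAt (fun ρ : ℝ => (1 - 3*m/ρ)*ℓ^2)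
      ((0 - (0*r - 3*m*1)/r^2)*ℓ^2) r := by
    have : HasDerivAt (fun ρ : ℝ => 3*m/ρ) ((0*r - 3*m*1)/r^2) r := by
      simpa [Pi.div_def] using (hasDerivAt_const r (3*m)).div (hasDerivAt_id r) hr
    exact ((hasDerivAt_const r (1:ℝ)).sub this).mul_const _
  have d3 : HasDerivAt (fun ρ : ℝ => (1 - 3*m/ρ)*ℓ^2/ρ^3)
      (((0 - (0*r - 3*m*1)/r^2)*ℓ^2*r^3 - (1 - 3*m/r)*ℓ^2*(3*r^2))/(r^3)^2) r := by
    simpa [Pi.div_def] using dn.div (hasDerivAt_pow 3 r) h3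
  have hd : HasDerivAt (fun ρ : ℝ => H₀^2*ρ - m/ρ^2 + (1 - 3*m/ρ)*ℓ^2/ρ^3) _ r := (d1.sub d2).add d3
  rw [hd.deriv]
  field_simp
  ring

lemma sds_key_ineq (m H₀ L rc : ℝ) (hm : 0 < m) (hH : 0 < H₀) (h2 : 2*m < rc)
    (hL : 0 ≤ L)
    (e1 : H₀^2*rc^5 - m*rc^2 + (rc-3*m)*L = 0)
    (e2 : H₀^2*rc^5 + 2*m*rc^2 + (12*m-3*rc)*L < 0) :
    6*m < rc ∧ H₀^2*rc^3 < m ∧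
      4*H₀^2*rc^4 - 15*m*H₀^2*rc^3 - m*rc + 6*m^2 < 0 := by
  have hrc : 0 < rc := lt_trans (by linarith) h2
  have hneg : (12*m-3*rc)*L < 0 := by nlinarith [pow_pos hrc 5, pow_pos hrc 2]
  have h4 : 4*m < rc := by
    rcases lt_or_ge (4*m) rc with h | h
    · exact h
    · exfalso; nlinarith
  have hLpos : 0 < L := by
    rcases hL.lt_or_eq with h | h
    · exact h
    · exfalso; rw [← h] at hneg; simp at hneg
  have hii : H₀^2*rc^3 < m := by nlinarith [pow_pos hrc 2]
  have hs : 4*H₀^2*rc^5 - m*rc^2 + 3*m*L < 0 := by linarith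
  have hprod : (rc - 3*m) * (4*H₀^2*rc^5 - m*rc^2 + 3*m*L) < 0 :=
    mul_neg_of_pos_of_neg (by linarith) hs
  have hP : rc^2*(4*H₀^2*rc^4 - 15*m*H₀^2*rc^3 - m*rc + 6*m^2) < 0 := by
    nlinarith [hprod, e1, mul_pos hm hm]
  have hP' : 4*H₀^2*rc^4 - 15*m*H₀^2*rc^3 - m*rc + 6*m^2 < 0 := by
    nlinarith [pow_pos hrc 2]
  refine ⟨?_, hii, hP'⟩
  by_contra h6
  push_neg at h6
  have hx : 0 < H₀^2*rc^3 := by positivity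
  rcases le_or_gt (4*rc) (15*m) with hc | hc
  · nlinarith [mul_nonneg (le_of_lt hx) (by linarith : (0:ℝ) ≤ 15*m - 4*rc)]
  · nlinarith [mul_pos hx (by linarith : (0:ℝ) < 4*rc - 15*m)]

lemma sds_poly_form (m H₀ ℓ rc : ℝ) (hm : 0 < m) (h2 : 2*m < rc)
    (hG : H₀^2*rc - m/rc^2 + (1 - 3*m/rc)*ℓ^2/rc^3 = 0)
    (hD : deriv (fun ρ : ℝ => H₀^2*ρ - m/ρ^2 + (1 - 3*m/ρ)*ℓ^2/ρ^3) rc < 0) :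
    H₀^2*rc^5 - m*rc^2 + (rc-3*m)*ℓ^2 = 0 ∧
    H₀^2*rc^5 + 2*m*rc^2 + (12*m-3*rc)*ℓ^2 < 0 := by
  have hrc : 0 < rc := by linarith
  have hrcne : rc ≠ 0 := ne_of_gt hrc
  rw [sds_deriv_G m H₀ ℓ rc hrcne] at hD
  constructor
  · have := hG
    field_simp at this
    nlinarith [this, pow_pos hrc 2]
  · have h5 : 0 < rc^5 := pow_pos hrc 5
    have := mul_lt_mul_of_pos_left hD h5
    rw [mul_zero] at this
    calc H₀^2*rc^5 + 2*m*rc^2 + (12*m-3*rc)*ℓ^2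
        = rc^5 * (H₀^2 + 2*m/rc^3 + (12*m - 3*rc)*ℓ^2/rc^5) := by field_simp
      _ < 0 := this

set_option maxHeartbeats 1000000 in
/-- (Proposition 11.) For the Schwarzschild–de Sitter spacetime with mass
`m > 0` and cosmological constant `Λ = 3H₀²`, with
`G(r) = H₀²·r − m/r² + (1 − 3m/r)·ℓ²/r³`, there exist `ℓ` and `r_c > 2m` with `G(r_c) = 0`
and `G'(r_c) < 0` (a stable circular particle orbit) iff `m·H₀ < 2/(75√3)`. Moreover every
such stable radius satisfies `6m < r_c < r₊`, where `r₊` is the larger positive root of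
`1 − 2m/r − r²H₀² = 0` (characterised by `r₊ > 3m`). -/
theorem sds_stable_circular_orbits
    (m H₀ : ℝ) (hm : 0 < m) (hH₀ : 0 < H₀) :
    ((∃ ℓ rc : ℝ, 2*m < rc ∧
        H₀^2*rc - m/rc^2 + (1 - 3*m/rc)*ℓ^2/rc^3 = 0 ∧
        deriv (fun ρ : ℝ => H₀^2*ρ - m/ρ^2 + (1 - 3*m/ρ)*ℓ^2/ρ^3) rc < 0)
      ↔ m*H₀ < 2/(75*Real.sqrt 3)) ∧
    (∀ ℓ rc rp : ℝ, 2*m < rc →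
      H₀^2*rc - m/rc^2 + (1 - 3*m/rc)*ℓ^2/rc^3 = 0 →
      deriv (fun ρ : ℝ => H₀^2*ρ - m/ρ^2 + (1 - 3*m/ρ)*ℓ^2/ρ^3) rc < 0 →
      3*m < rp → 1 - 2*m/rp - rp^2*H₀^2 = 0 →
      6*m < rc ∧ rc < rp) := by
  have hs3 : (0:ℝ) < Real.sqrt 3 := Real.sqrt_pos.mpr (by norm_num)
  have hs3sq : Real.sqrt 3 ^ 2 = 3 := Real.sq_sqrt (by norm_num)
  constructor
  · constructor
    · rintro ⟨ℓ, rc, h2, hG, hD⟩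
      obtain ⟨e1, e2⟩ := sds_poly_form m H₀ ℓ rc hm h2 hG hD
      obtain ⟨h6, hii, hP⟩ := sds_key_ineq m H₀ (ℓ^2) rc hm hH₀ h2 (sq_nonneg ℓ) e1 e2
      have hrc : 0 < rc := by linarith
      -- from P(rc) < 0 and rc > 6m deduce 16875 m² H₀² < 4
      have hK : 0 < rc^3*(4*rc-15*m) := by
        apply mul_pos (pow_pos hrc 3); linarith
      have hA : 16875*m^3*(H₀^2*rc^3*(4*rc-15*m)) < 16875*m^3*(m*(rc-6*m)) := by
        apply mul_lt_mul_of_pos_left _ (by positivity)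
        nlinarith
      have hB : 16875*m^3*(m*(rc-6*m)) ≤ 4*m*(rc^3*(4*rc-15*m)) := by
        nlinarith [mul_nonneg (mul_nonneg hm.le (sq_nonneg (2*rc-15*m)))
          (by positivity : (0:ℝ) ≤ 4*rc^2+45*m*rc+450*m^2)]
      have hC : 16875*m^3*H₀^2 * (rc^3*(4*rc-15*m)) < 4*m * (rc^3*(4*rc-15*m)) := by
        nlinarith [hA, hB]
      have hD2 : 16875*m^3*H₀^2 < 4*m := (mul_lt_mul_iff_of_pos_right hK).mp hC
      have hM : 16875*(m*H₀)^2 < 4 := by nlinarith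
      -- conclude m*H₀ < 2/(75√3)
      rw [lt_div_iff₀ (by positivity)]
      nlinarith [mul_pos (mul_pos hm hH₀) hs3, hM, sq_nonneg (m*H₀*(75*Real.sqrt 3) - 2)]
    · intro h
      have hM : 16875*(m*H₀)^2 < 4 := by
        rw [lt_div_iff₀ (by positivity)] at h
        nlinarith [mul_pos (mul_pos hm hH₀) hs3]
      set rc : ℝ := 15*m/2 with hrc_def
      have hrc : 0 < rc := by positivity
      have hde : (0:ℝ) < rc - 3*m := by rw [hrc_def]; linarith
      have hnum : 0 < m - H₀^2*rc^3 := by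
        rw [hrc_def]; nlinarith [mul_pos hm hm]
      set L : ℝ := rc^2*(m - H₀^2*rc^3)/(rc - 3*m) with hL_def
      have hLpos : 0 < L := by positivity
      refine ⟨Real.sqrt L, rc, by linarith, ?_, ?_⟩
      · rw [Real.sq_sqrt hLpos.le, hL_def]
        field_simp [(show (0:ℝ) < rc - m*3 by linarith).ne']
        ring
      · rw [sds_deriv_G m H₀ _ rc (ne_of_gt hrc), Real.sq_sqrt hLpos.le, hL_def]
        have key : H₀^2 + 2*m/rc^3 + (12*m - 3*rc)*(rc^2*(m - H₀^2*rc^3)/(rc - 3*m))/rc^5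
            = (4*H₀^2*rc^4 - 15*m*H₀^2*rc^3 - m*rc + 6*m^2)/(rc^3*(rc-3*m)) := by
          field_simp [(show (0:ℝ) < rc - m*3 by linarith).ne']
          ring
        rw [key]
        apply div_neg_of_neg_of_pos _ (by positivity)
        rw [hrc_def]
        nlinarith [mul_pos hm hm, mul_pos (mul_pos hm hm) (mul_pos hm hm)]
  · intro ℓ rc rp h2 hG hD h3rp heq0
    obtain ⟨e1, e2⟩ := sds_poly_form m H₀ ℓ rc hm h2 hG hD
    obtain ⟨h6, hii, hP⟩ := sds_key_ineq m H₀ (ℓ^2) rc hm hH₀ h2 (sq_nonneg ℓ) e1 e2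
    refine ⟨h6, ?_⟩
    have hrp : 0 < rp := by linarith
    have hrc : 0 < rc := by linarith
    have heq : rp - 2*m - H₀^2*rp^3 = 0 := by
      have := heq0
      field_simp at this
      nlinarith [this]
    have hfrc : 0 < rc - 2*m - H₀^2*rc^3 := by nlinarith
    by_contra hge
    push_neg at hge  -- rp ≤ rc
    have hkey : rp*(rc - 2*m - H₀^2*rc^3)
        = -(H₀^2*rp*(rc-rp)^2*(rc+2*rp)) - (rc-rp)*(2*rp-6*m) := by
      linear_combination (3*rc - 2*rp) * heq
    have h1 : 0 ≤ H₀^2*rp*(rc-rp)^2*(rc+2*rp) := by positivity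
    have h2' : 0 ≤ (rc-rp)*(2*rp-6*m) :=
      mul_nonneg (by linarith) (by linarith)
    have := mul_pos hrp hfrc
    rw [hkey] at this
    linarith
end
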